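/- arXiv:1902.06621 — 7 statements merged into one kernel-verified Lean document; each statement's English description precedes it below -/
import Mathlib

section
/- Let k > 1 and let T ⊂ ℝ be a k-thick set, i.e. T is closed and for every λ > 0 the set T intersects [-kλ, -λ] ∪ [λ, kλ]. If p ∈ ℝ[s] is a polynomial of degree δ ≥ 1, then the image p(T) is 2k^δ-thick at infinity, i.e. for all sufficiently large r > 0, p(T) intersects [-2k^δ r, -r] ∪ [r, 2k^δ r]. -/
/-- A closed subset `T ⊆ ℝ` is `k`-thick: for every `λ > 0`,
`T` meets `[-kλ, -λ] ∪ [λ, kλ]`. -/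
def IsKThick (k : ℝ) (T : Set ℝ) : Prop :=
  IsClosed T ∧ ∀ lam : ℝ, 0 < lam →
    (T ∩ (Set.Icc (-(k * lam)) (-lam) ∪ Set.Icc lam (k * lam))).Nonempty

/-- On a ray `[M, ∞)`, the absolute value of a nonzero polynomial is within a
factor `[3/4, 5/4]` of `|leadingCoeff| * |x| ^ natDegree`. -/
lemma poly_ray_bound (q : Polynomial ℝ) (hq : q ≠ 0) :
    ∃ M : ℝ, 1 ≤ M ∧ ∀ x : ℝ, M ≤ x →
      3 / 4 * |q.leadingCoeff| * |x| ^ q.natDegree ≤ |q.eval x| ∧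
      |q.eval x| ≤ 5 / 4 * |q.leadingCoeff| * |x| ^ q.natDegree := by
  have h := q.isEquivalent_atTop_lead
  have h2 := h.isLittleO.def (by norm_num : (0:ℝ) < 1/4)
  rw [Filter.eventually_atTop] at h2
  obtain ⟨M₀, hM₀⟩ := h2
  refine ⟨max 1 M₀, le_max_left _ _, fun x hx => ?_⟩
  have hx1 : (1:ℝ) ≤ x := le_trans (le_max_left _ _) hx
  have hb := hM₀ x (le_trans (le_max_right _ _) hx)
  simp only [Pi.sub_apply, Real.norm_eq_abs] at hb
  have hg : |q.leadingCoeff * x ^ q.natDegree| = |q.leadingCoeff| * |x| ^ q.natDegree := by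
    rw [abs_mul, abs_pow]
  rw [hg] at hb
  have t1 : |q.eval x| - |q.leadingCoeff * x ^ q.natDegree| ≤
      |q.eval x - q.leadingCoeff * x ^ q.natDegree| := abs_sub_abs_le_abs_sub _ _
  have t2 : |q.leadingCoeff * x ^ q.natDegree| - |q.eval x| ≤
      |q.leadingCoeff * x ^ q.natDegree - q.eval x| := abs_sub_abs_le_abs_sub _ _
  rw [abs_sub_comm] at t2
  rw [hg] at t1 t2
  constructor <;> linarith

theorem image_of_thick_is_thick_at_infty (k : ℝ) (hk : 1 < k) (T : Set ℝ)
    (hT : IsKThick k T) (p : Polynomial ℝ) (δ : ℕ) (hδ : 1 ≤ δ)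
    (hdeg : p.natDegree = δ) :
    ∃ r₀ : ℝ, 0 < r₀ ∧ ∀ r : ℝ, r₀ ≤ r →
      ((fun t => p.eval t) '' T ∩
        (Set.Icc (-(2 * k ^ δ * r)) (-r) ∪ Set.Icc r (2 * k ^ δ * r))).Nonempty := by
  have hp0 : p ≠ 0 := by
    intro h; rw [h, Polynomial.natDegree_zero] at hdeg; omega
  set c := p.leadingCoeff with hc
  have hcne : c ≠ 0 := Polynomial.leadingCoeff_ne_zero.mpr hp0
  have hcpos : 0 < |c| := abs_pos.mpr hcne
  have hδne : δ ≠ 0 := by omega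
  -- the negated polynomial
  set q : Polynomial ℝ := p.comp (-Polynomial.X) with hqdef
  have hXdeg : (-Polynomial.X : Polynomial ℝ).natDegree = 1 := by simp
  have hq0 : q ≠ 0 := by
    intro h
    have : q.natDegree = δ := by
      rw [hqdef, Polynomial.natDegree_comp, hXdeg, hdeg, mul_one]
    rw [h, Polynomial.natDegree_zero] at this; omega
  have hqdeg : q.natDegree = δ := by
    rw [hqdef, Polynomial.natDegree_comp, hXdeg, hdeg, mul_one]
  have hqlc : |q.leadingCoeff| = |c| := by
    rw [hqdef, Polynomial.leadingCoeff_comp (by rw [hXdeg]; omega)]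
    simp [abs_mul, abs_pow, hdeg]; rfl
  have hqeval : ∀ x : ℝ, q.eval x = p.eval (-x) := by
    intro x; rw [hqdef, Polynomial.eval_comp]; simp
  obtain ⟨M₁, hM₁1, hM₁⟩ := poly_ray_bound p hp0
  obtain ⟨M₂, hM₂1, hM₂⟩ := poly_ray_bound q hq0
  set M := max M₁ M₂ with hM
  have hM1 : 1 ≤ M := le_trans hM₁1 (le_max_left _ _)
  -- combined two-sided bound
  have key : ∀ t : ℝ, M ≤ |t| →
      3 / 4 * |c| * |t| ^ δ ≤ |p.eval t| ∧ |p.eval t| ≤ 5 / 4 * |c| * |t| ^ δ := by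
    intro t ht
    rcases le_or_gt 0 t with h0 | h0
    · have hM₁t : M₁ ≤ t := le_trans (le_max_left _ _) (by rwa [abs_of_nonneg h0] at ht)
      have := hM₁ t hM₁t
      rw [hdeg] at this; exact this
    · have hneg : M ≤ -t := by rwa [abs_of_neg h0] at ht
      have hb := hM₂ (-t) (le_trans (le_max_right _ _) hneg)
      rw [hqeval, neg_neg, hqdeg, hqlc, abs_neg] at hb
      exact hb
  refine ⟨max 1 (3 / 4 * |c| * M ^ δ), lt_of_lt_of_le one_pos (le_max_left _ _),
    fun r hr => ?_⟩
  have hr1 : (1:ℝ) ≤ r := le_trans (le_max_left _ _) hr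
  have hrpos : (0:ℝ) < r := lt_of_lt_of_le one_pos hr1
  have hrM : 3 / 4 * |c| * M ^ δ ≤ r := le_trans (le_max_right _ _) hr
  -- choose λ
  set lam : ℝ := (4 * r / (3 * |c|)) ^ ((δ : ℝ)⁻¹) with hlam
  have hbase : 0 < 4 * r / (3 * |c|) := by positivity
  have hlampos : 0 < lam := Real.rpow_pos_of_pos hbase _
  have hlampow : lam ^ δ = 4 * r / (3 * |c|) :=
    Real.rpow_inv_natCast_pow hbase.le hδne
  have hMlam : M ≤ lam := by
    rw [← pow_le_pow_iff_left₀ (by linarith : (0:ℝ) ≤ M) hlampos.le hδne, hlampow,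
      le_div_iff₀ (by positivity)]
    nlinarith
  obtain ⟨t, htT, hti⟩ := hT.2 lam hlampos
  have habs : lam ≤ |t| ∧ |t| ≤ k * lam := by
    rcases hti with h | h
    · obtain ⟨h1, h2⟩ := h
      have hlt : t < 0 := lt_of_le_of_lt h2 (by linarith)
      rw [abs_of_neg hlt]; constructor <;> linarith
    · obtain ⟨h1, h2⟩ := h
      rw [abs_of_nonneg (by linarith)]; exact ⟨h1, h2⟩
  obtain ⟨hab1, hab2⟩ := habs
  have hMt : M ≤ |t| := le_trans hMlam hab1
  obtain ⟨hlow, hhigh⟩ := key t hMt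
  have hlampow' : 3 / 4 * |c| * lam ^ δ = r := by
    rw [hlampow]; field_simp
  have hple : lam ^ δ ≤ |t| ^ δ :=
    pow_le_pow_left₀ hlampos.le hab1 δ
  have hpge : |t| ^ δ ≤ (k * lam) ^ δ :=
    pow_le_pow_left₀ (abs_nonneg t) hab2 δ
  have hkpow : (k * lam) ^ δ = k ^ δ * lam ^ δ := mul_pow _ _ _
  have hkpos : (0:ℝ) < k ^ δ := pow_pos (by linarith) δ
  have hlower : r ≤ |p.eval t| := by
    calc r = 3 / 4 * |c| * lam ^ δ := hlampow'.symm
    _ ≤ 3 / 4 * |c| * |t| ^ δ := mul_le_mul_of_nonneg_left hple (by positivity)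
    _ ≤ |p.eval t| := hlow
  have hupper : |p.eval t| ≤ 2 * k ^ δ * r := by
    have h1 : |p.eval t| ≤ 5 / 4 * |c| * (k ^ δ * lam ^ δ) := by
      rw [← hkpow]; exact le_trans hhigh (mul_le_mul_of_nonneg_left hpge (by positivity))
    have h2 : 5 / 4 * |c| * (k ^ δ * lam ^ δ) = 5 / 3 * k ^ δ * r := by
      rw [hlampow]; field_simp
    rw [h2] at h1
    nlinarith
  refine ⟨p.eval t, ⟨t, htT, rfl⟩, ?_⟩
  rcases le_or_gt 0 (p.eval t) with h0 | h0
  · right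
    rw [abs_of_nonneg h0] at hlower hupper
    exact ⟨hlower, hupper⟩
  · left
    rw [abs_of_neg h0] at hlower hupper
    exact ⟨by linarith, by linarith⟩
end

section
/- Let k > 1 and let (T_i)_{i∈ℕ} be a sequence of k-thick subsets of ℝ. Then the set limsup_i T_i = {x ∈ ℝ : every neighborhood of x meets T_i for infinitely many i} is also k-thick. -/
theorem limsup_of_thick_is_thick (k : ℝ) (hk : 1 < k)
    (T : ℕ → Set ℝ) (hT : ∀ i, IsKThick k (T i)) :
    IsKThick k {x : ℝ | ∀ U ∈ nhds x, {i : ℕ | (T i ∩ U).Nonempty}.Infinite} := by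
  constructor
  · rw [← isOpen_compl_iff, isOpen_iff_mem_nhds]
    intro x hx
    simp only [Set.mem_compl_iff, Set.mem_setOf_eq, not_forall] at hx
    obtain ⟨U, hU, hfin⟩ := hx
    rw [Set.not_infinite] at hfin
    obtain ⟨V, hVU, hVopen, hxV⟩ := mem_nhds_iff.mp hU
    filter_upwards [hVopen.mem_nhds hxV] with y hy
    simp only [Set.mem_compl_iff, Set.mem_setOf_eq, not_forall]
    refine ⟨V, hVopen.mem_nhds hy, ?_⟩
    rw [Set.not_infinite]
    exact hfin.subset fun i hi =>
      hi.mono (Set.inter_subset_inter_right _ hVU)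
  · intro lam hlam
    have hKc : IsCompact (Set.Icc (-(k * lam)) (-lam) ∪ Set.Icc lam (k * lam)) :=
      isCompact_Icc.union isCompact_Icc
    choose x hx using fun i => (hT i).2 lam hlam
    obtain ⟨a, haK, φ, hφ, hconv⟩ := hKc.tendsto_subseq fun i => (hx i).2
    refine ⟨a, ?_, haK⟩
    intro U hU
    have hev : ∀ᶠ n in Filter.atTop, x (φ n) ∈ U := hconv.eventually_mem hU
    obtain ⟨N, hN⟩ := Filter.eventually_atTop.mp hev
    apply Set.infinite_of_injective_forall_mem
      (f := fun n : ℕ => φ (n + N))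
    · intro a b hab
      have := hφ.injective hab
      omega
    · intro n
      exact ⟨x (φ (n + N)), (hx (φ (n + N))).1, hN _ (Nat.le_add_left N n)⟩
end

section
/- With the notation of SO°(d,1) = SO°(Q) as above, let U^⊥ be a linear subspace of N ≅ ℝ^{d−1} and let v_i = exp u⁻(x_i) with ‖x_i‖ → ∞ and x_i/‖x_i‖ → x₀ a unit vector. Then for every r ∈ ℝ, setting s_i = log(1 − r/‖x_i‖) (defined for large i), the sequence v_i a_{s_i} v_i^{−1} converges to exp u⁻(r x₀). Consequently limsup_i v_i A v_i^{−1} contains the one-parameter subgroup {exp u⁻(r x₀) : r ∈ ℝ} of N. -/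
/-- Index type for `(d+1) × (d+1)` matrices in block form `1 + (d-1) + 1`, with `n = d - 1`. -/
abbrev Idx (n : ℕ) := Unit ⊕ Fin n ⊕ Unit

/-- The nilpotent matrix `u⁻(x)` with first row `(0, xᵗ, 0)` and middle-block last
column `-x`. -/
def uminus {n : ℕ} (x : Fin n → ℝ) : Matrix (Idx n) (Idx n) ℝ :=
  Matrix.of fun i j =>
    match i, j with
    | Sum.inl _, Sum.inr (Sum.inl jj) => x jj
    | Sum.inr (Sum.inl ii), Sum.inr (Sum.inr _) => -(x ii)
    | _, _ => 0

/-- The nilpotent matrix `u⁺(w)` with first column `(0, w, 0)ᵗ` and bottom row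
`(0, -wᵗ, 0)`. -/
def uplus {n : ℕ} (w : Fin n → ℝ) : Matrix (Idx n) (Idx n) ℝ :=
  Matrix.of fun i j =>
    match i, j with
    | Sum.inr (Sum.inl ii), Sum.inl _ => w ii
    | Sum.inr (Sum.inr _), Sum.inr (Sum.inl jj) => -(w jj)
    | _, _ => 0

/-- The diagonal element `a_s = diag(e^s, Id, e^{-s})`. -/
noncomputable def aMat {n : ℕ} (s : ℝ) : Matrix (Idx n) (Idx n) ℝ :=
  Matrix.of fun i j =>
    match i, j with
    | Sum.inl _, Sum.inl _ => Real.exp s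
    | Sum.inr (Sum.inl ii), Sum.inr (Sum.inl jj) => if ii = jj then 1 else 0
    | Sum.inr (Sum.inr _), Sum.inr (Sum.inr _) => Real.exp (-s)
    | _, _ => 0

/-- The matrix exponential of a matrix `X` with `X³ = 0`: `exp X = 1 + X + X²/2`. -/
noncomputable def expNil {n : ℕ} (X : Matrix (Idx n) (Idx n) ℝ) : Matrix (Idx n) (Idx n) ℝ :=
  1 + X + (1 / 2 : ℝ) • (X * X)

/-- The Euclidean norm on `ℝ^n`. -/
noncomputable def euclNorm {n : ℕ} (x : Fin n → ℝ) : ℝ := Real.sqrt (∑ i, (x i) ^ 2)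

/-- Explicit form of `expNil (uminus x)`. -/
noncomputable def Vmat {n : ℕ} (x : Fin n → ℝ) : Matrix (Idx n) (Idx n) ℝ :=
  Matrix.of fun i j =>
    match i, j with
    | Sum.inl _, Sum.inl _ => 1
    | Sum.inl _, Sum.inr (Sum.inl jj) => x jj
    | Sum.inl _, Sum.inr (Sum.inr _) => -(∑ k, x k ^ 2) / 2
    | Sum.inr (Sum.inl ii), Sum.inr (Sum.inl jj) => if ii = jj then 1 else 0
    | Sum.inr (Sum.inl ii), Sum.inr (Sum.inr _) => -(x ii)
    | Sum.inr (Sum.inr _), Sum.inr (Sum.inr _) => 1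
    | _, _ => 0

/-- Explicit form of the conjugation `Vmat x * aMat s * Vmat (-x)`. -/
noncomputable def Mmat {n : ℕ} (x : Fin n → ℝ) (s : ℝ) : Matrix (Idx n) (Idx n) ℝ :=
  Matrix.of fun i j =>
    match i, j with
    | Sum.inl _, Sum.inl _ => Real.exp s
    | Sum.inl _, Sum.inr (Sum.inl jj) => (1 - Real.exp s) * x jj
    | Sum.inl _, Sum.inr (Sum.inr _) =>
        -(∑ k, x k ^ 2) / 2 * (Real.exp s + Real.exp (-s) - 2)
    | Sum.inr (Sum.inl ii), Sum.inr (Sum.inl jj) => if ii = jj then 1 else 0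
    | Sum.inr (Sum.inl ii), Sum.inr (Sum.inr _) => (1 - Real.exp (-s)) * x ii
    | Sum.inr (Sum.inr _), Sum.inr (Sum.inr _) => Real.exp (-s)
    | _, _ => 0

theorem expNil_uminus {n : ℕ} (x : Fin n → ℝ) : expNil (uminus x) = Vmat x := by
  ext i j
  rcases i with i | i | i <;> rcases j with j | j | j <;>
    simp [expNil, uminus, Vmat, Matrix.mul_apply, Matrix.one_apply,
      Fintype.sum_sum_type] <;>
    (try simp only [mul_neg, Finset.sum_neg_distrib, ← pow_two]) <;> ring

theorem V_mul_V {n : ℕ} (x : Fin n → ℝ) : Vmat x * Vmat (-x) = 1 := by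
  ext i j
  rcases i with i | i | i <;> rcases j with j | j | j <;>
    simp [Vmat, Matrix.mul_apply, Matrix.one_apply, Fintype.sum_sum_type] <;>
    (try simp only [mul_neg, neg_mul, neg_neg, Finset.sum_neg_distrib, ← pow_two]) <;> ring

theorem V_aMat_V {n : ℕ} (x : Fin n → ℝ) (s : ℝ) :
    Vmat x * aMat s * Vmat (-x) = Mmat x s := by
  ext i j
  rcases i with i | i | i <;> rcases j with j | j | j <;>
    simp [Vmat, aMat, Mmat, Matrix.mul_apply, Matrix.one_apply, Fintype.sum_sum_type,
      Finset.sum_ite_eq, Finset.mul_sum] <;>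
    (try simp only [mul_neg, neg_mul, neg_neg, Finset.sum_neg_distrib, ← pow_two,
      ← Finset.sum_mul]) <;> ring

theorem expNil_inv {n : ℕ} (x : Fin n → ℝ) : (expNil (uminus x))⁻¹ = Vmat (-x) := by
  rw [expNil_uminus]
  exact Matrix.inv_eq_right_inv (V_mul_V x)

open Filter in
theorem main_tendsto (n : ℕ) (x : ℕ → Fin n → ℝ) (x₀ : Fin n → ℝ)
    (hx : Filter.Tendsto (fun i => euclNorm (x i)) Filter.atTop Filter.atTop)
    (hx₀ : euclNorm x₀ = 1)
    (hdir : Filter.Tendsto (fun i => (euclNorm (x i))⁻¹ • x i) Filter.atTop (nhds x₀))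
    (r : ℝ) :
    Filter.Tendsto
      (fun i => expNil (uminus (x i)) *
          aMat (Real.log (1 - r / euclNorm (x i))) * (expNil (uminus (x i)))⁻¹)
      Filter.atTop (nhds (expNil (uminus (r • x₀)))) := by
  set N : ℕ → ℝ := fun i => euclNorm (x i) with hNdef
  have hev : ∀ᶠ i in atTop, |r| + 1 ≤ N i := hx.eventually_ge_atTop _
  have hpos : ∀ᶠ i in atTop, 0 < N i ∧ 0 < 1 - r / N i := by
    filter_upwards [hev] with i hi
    have hN : 0 < N i := lt_of_lt_of_le (by positivity) hi
    refine ⟨hN, ?_⟩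
    have habs : |r / N i| < 1 := by
      rw [abs_div, abs_of_pos hN, div_lt_one hN]; linarith
    have h2 := abs_lt.mp habs
    linarith [h2.2]
  have hq : Tendsto (fun i => r / N i) atTop (nhds 0) := tendsto_const_nhds.div_atTop hx
  have ht1 : Tendsto (fun i => 1 - r / N i) atTop (nhds 1) := by
    have h := (tendsto_const_nhds (x := (1 : ℝ)) (f := atTop)).sub hq
    simpa using h
  have htinv : Tendsto (fun i => (1 - r / N i)⁻¹) atTop (nhds 1) := by
    have h := ht1.inv₀ one_ne_zero
    simpa using h
  have hcomp : ∀ j, Tendsto (fun i => (N i)⁻¹ * x i j) atTop (nhds (x₀ j)) := by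
    intro j
    have h := tendsto_pi_nhds.mp hdir j
    simpa [Pi.smul_apply, smul_eq_mul] using h
  have hx₀sq : ∑ k, (x₀ k) ^ 2 = 1 := by
    have h := hx₀
    rw [euclNorm, Real.sqrt_eq_one] at h
    exact h
  have hN2 : ∀ i, (∑ k, (x i k) ^ 2) = (N i) ^ 2 := by
    intro i
    have h : N i = Real.sqrt (∑ k, (x i k) ^ 2) := rfl
    rw [h, Real.sq_sqrt (by positivity)]
  have hEq : ∀ᶠ i in atTop,
      Mmat (x i) (Real.log (1 - r / N i)) =
      expNil (uminus (x i)) * aMat (Real.log (1 - r / N i)) * (expNil (uminus (x i)))⁻¹ := by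
    filter_upwards with i
    rw [expNil_inv, expNil_uminus, V_aMat_V]
  rw [expNil_uminus]
  refine Filter.Tendsto.congr' hEq ?_
  refine tendsto_pi_nhds.mpr ?_
  intro a
  rw [tendsto_pi_nhds]
  intro b
  rcases a with a | a | a <;> rcases b with b | b | b <;>
      simp only [Mmat, Vmat, Matrix.of_apply, Pi.smul_apply, smul_eq_mul] <;>
      (try exact tendsto_const_nhds)
  -- (inl, inl): exp (log t) → 1
  · refine Filter.Tendsto.congr' ?_ ht1
    filter_upwards [hpos] with i hi
    rw [Real.exp_log hi.2]
  -- (inl, inr inl b): (1 - exp (log t)) * x i b → r * x₀ b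
  · refine Filter.Tendsto.congr' ?_ (tendsto_const_nhds.mul (hcomp b))
    filter_upwards [hpos] with i hi
    rw [Real.exp_log hi.2]
    have hNne : N i ≠ 0 := ne_of_gt hi.1
    field_simp
    ring
  -- (inl, inr inr): -(∑ x²)/2 * (e^s + e^{-s} - 2) → -(r²)/2
  · have hval : -(∑ k, (r * x₀ k) ^ 2) / 2 = -(r ^ 2 / 2) * 1 := by
      simp only [mul_pow, ← Finset.mul_sum, hx₀sq]
      ring
    rw [hval]
    refine Filter.Tendsto.congr' ?_ (tendsto_const_nhds.mul htinv)
    filter_upwards [hpos] with i hi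
    rw [Real.exp_log hi.2, Real.exp_neg, Real.exp_log hi.2, hN2 i]
    have hNne : N i ≠ 0 := ne_of_gt hi.1
    have htne : 1 - r / N i ≠ 0 := ne_of_gt hi.2
    have hrN : r < N i := (div_lt_one hi.1).mp (by linarith [hi.2])
    have hNr : N i - r ≠ 0 := ne_of_gt (by linarith)
    field_simp
    ring
  -- (inr inl a, inr inr): (1 - exp (-log t)) * x i a → -(r * x₀ a)
  · rw [show -(r * x₀ a) = -r * x₀ a * 1 by ring]
    refine Filter.Tendsto.congr' ?_
      (((tendsto_const_nhds (x := -r)).mul (hcomp a)).mul htinv)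
    filter_upwards [hpos] with i hi
    rw [Real.exp_neg, Real.exp_log hi.2]
    have hNne : N i ≠ 0 := ne_of_gt hi.1
    have htne : 1 - r / N i ≠ 0 := ne_of_gt hi.2
    have hrN : r < N i := (div_lt_one hi.1).mp (by linarith [hi.2])
    have hNr : N i - r ≠ 0 := ne_of_gt (by linarith)
    field_simp
    ring
  -- (inr inr, inr inr): exp (-log t) → 1
  · refine Filter.Tendsto.congr' ?_ htinv
    filter_upwards [hpos] with i hi
    rw [Real.exp_neg, Real.exp_log hi.2]

theorem limit_of_conjugated_diagonal (n : ℕ) (x : ℕ → Fin n → ℝ) (x₀ : Fin n → ℝ)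
    (hx : Filter.Tendsto (fun i => euclNorm (x i)) Filter.atTop Filter.atTop)
    (hx₀ : euclNorm x₀ = 1)
    (hdir : Filter.Tendsto (fun i => (euclNorm (x i))⁻¹ • x i) Filter.atTop (nhds x₀)) :
    (∀ r : ℝ,
      Filter.Tendsto
        (fun i => expNil (uminus (x i)) *
            aMat (Real.log (1 - r / euclNorm (x i))) * (expNil (uminus (x i)))⁻¹)
        Filter.atTop (nhds (expNil (uminus (r • x₀))))) ∧
    ∀ r : ℝ, ∃ s : ℕ → ℝ,
      Filter.Tendsto
        (fun i => expNil (uminus (x i)) * aMat (s i) * (expNil (uminus (x i)))⁻¹)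
        Filter.atTop (nhds (expNil (uminus (r • x₀)))) := by
  refine ⟨main_tendsto n x x₀ hx hx₀ hdir, fun r =>
    ⟨fun i => Real.log (1 - r / euclNorm (x i)), main_tendsto n x x₀ hx hx₀ hdir r⟩⟩
end

section
/- Let W be a Lie group and S ⊂ W a closed subsemigroup (closed under multiplication and topologically closed). Suppose there is a sequence α_i → e in S with α_i ≠ e, and write α_i = exp ξ_i with ξ_i ∈ Lie(W), ξ_i → 0, ξ_i ≠ 0. If v ∈ Lie(W) is a limit point of the unit vectors ξ_i/‖ξ_i‖ (with respect to some norm on Lie(W)), then the one-parameter subsemigroup {exp(tv) : t ≥ 0} is contained in S. -/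
open Filter

private lemma pow_mem_semigroup {W : Type*} [Monoid W] {S : Set W}
    (hSmul : ∀ a ∈ S, ∀ b ∈ S, a * b ∈ S) {a : W} (ha : a ∈ S) :
    ∀ m : ℕ, 1 ≤ m → a ^ m ∈ S := by
  intro m hm
  induction m with
  | zero => omega
  | succ k ih =>
    rcases Nat.eq_or_lt_of_le hm with h | h
    · simpa [← h] using ha
    · have hk : 1 ≤ k := by omega
      rw [pow_succ]
      exact hSmul _ (ih hk) a ha

/-- In a Lie group `W` with exponential map `eExp : Lie(W) → W` (continuous, and
compatible with natural powers), if `S ⊆ W` is a closed subsemigroup containing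
elements `exp ξᵢ` with `ξᵢ → 0`, `ξᵢ ≠ 0`, and `v` is a limit point of the unit
vectors `ξᵢ/‖ξᵢ‖`, then the one-parameter subsemigroup `{exp(tv) : t ≥ 0}` is
contained in `S`. -/
theorem one_param_semigroup_in_closed_semigroup
    {E W : Type*} [NormedAddCommGroup E] [NormedSpace ℝ E]
    [TopologicalSpace W] [Group W] [IsTopologicalGroup W]
    (eExp : E → W) (hcont : Continuous eExp)
    (hpow : ∀ (m : ℕ) (ξ : E), eExp ((m : ℝ) • ξ) = eExp ξ ^ m)
    (S : Set W) (hScl : IsClosed S) (hSmul : ∀ a ∈ S, ∀ b ∈ S, a * b ∈ S)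
    (ξ : ℕ → E) (hξS : ∀ i, eExp (ξ i) ∈ S)
    (hξ0 : Tendsto ξ atTop (nhds 0)) (hξne : ∀ i, ξ i ≠ 0)
    (v : E) (φ : ℕ → ℕ) (hφ : StrictMono φ)
    (hv : Tendsto (fun m => ‖ξ (φ m)‖⁻¹ • ξ (φ m)) atTop (nhds v)) :
    ∀ t : ℝ, 0 ≤ t → eExp (t • v) ∈ S := by
  intro t ht
  rcases eq_or_lt_of_le ht with rfl | htpos
  · -- t = 0 : eExp 0 is the limit of eExp (ξ i) ∈ S
    have : Tendsto (fun i => eExp (ξ i)) atTop (nhds (eExp 0)) :=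
      (hcont.tendsto 0).comp hξ0
    have h0 : eExp ((0:ℝ) • v) = eExp 0 := by simp
    rw [h0]
    exact hScl.mem_of_tendsto this (Eventually.of_forall hξS)
  · set n : ℕ → ℝ := fun i => ‖ξ (φ i)‖ with hn
    have hnpos : ∀ i, 0 < n i := fun i => norm_pos_iff.mpr (hξne (φ i))
    have hn0 : Tendsto n atTop (nhds 0) := by
      have : Tendsto (fun i => ξ (φ i)) atTop (nhds 0) := hξ0.comp hφ.tendsto_atTop
      simpa [hn] using this.norm
    set m : ℕ → ℕ := fun i => ⌊t / n i⌋₊ with hm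
    -- (m i) * n i → t
    have hlb : ∀ i, t - n i ≤ (m i : ℝ) * n i := by
      intro i
      have h1 : t / n i < (m i : ℝ) + 1 := Nat.lt_floor_add_one _
      have := (div_lt_iff₀ (hnpos i)).mp h1
      nlinarith [hnpos i]
    have hub : ∀ i, (m i : ℝ) * n i ≤ t := by
      intro i
      have h1 : (m i : ℝ) ≤ t / n i := Nat.floor_le (by positivity)
      calc (m i : ℝ) * n i ≤ (t / n i) * n i := by
            nlinarith [hnpos i]
        _ = t := div_mul_cancel₀ t (hnpos i).ne'
    have hmn : Tendsto (fun i => (m i : ℝ) * n i) atTop (nhds t) := by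
      have hlow : Tendsto (fun i => t - n i) atTop (nhds t) := by
        simpa using (tendsto_const_nhds (x := t)).sub hn0
      exact tendsto_of_tendsto_of_tendsto_of_le_of_le hlow tendsto_const_nhds
        (fun i => hlb i) (fun i => hub i)
    -- (m i) • ξ (φ i) → t • v
    have hkey : Tendsto (fun i => (m i : ℝ) • ξ (φ i)) atTop (nhds (t • v)) := by
      have : ∀ i, (m i : ℝ) • ξ (φ i) = ((m i : ℝ) * n i) • ((n i)⁻¹ • ξ (φ i)) := by
        intro i
        rw [smul_smul, mul_assoc, mul_inv_cancel₀ (hnpos i).ne', mul_one]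
      simp only [this]
      exact hmn.smul hv
    have hexp : Tendsto (fun i => eExp ((m i : ℝ) • ξ (φ i))) atTop (nhds (eExp (t • v))) :=
      (hcont.tendsto _).comp hkey
    apply hScl.mem_of_tendsto hexp
    -- eventually m i ≥ 1, so eExp ((m i) • ξ (φ i)) = eExp (ξ (φ i)) ^ (m i) ∈ S
    have hev : ∀ᶠ i in atTop, n i < t :=
      hn0.eventually (Filter.Tendsto.eventually_lt_const htpos tendsto_id) |>.mono (fun i h => h)
    filter_upwards [hev] with i hi
    have hm1 : 1 ≤ m i := by
      rw [hm]
      exact (Nat.one_le_floor_iff _).mpr (by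
        rw [le_div_iff₀ (hnpos i)]; linarith)
    rw [hpow]
    exact pow_mem_semigroup hSmul (hξS (φ i)) _ hm1
end

section
/- Let W be a Lie group, W₀ ⊂ W a compact Lie subgroup, and S ⊂ W a closed subsemigroup containing a subgroup M₀ ⊂ W₀ with M₀ = S ∩ W₀ ∩ S^{-1} being a group. Suppose there is a sequence α_i → e in S with α_i ∉ W₀ for all i, and each α_i = exp ξ_i with ξ_i → 0 nonzero lying in a fixed complement m₀^⊥ of Lie(M₀) in Lie(W). Then any limit direction v of ξ_i/‖ξ_i‖ satisfies: either exp(ℝ_{≥0} v) ⊂ S, and if moreover exp(ℝv) ⊄ W₀ then the semigroup {exp(tv) : t ≥ 0} is not contained in W₀. -/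
open Filter Pointwise

/-- Refined semigroup-limit lemma with a compact factor: `W₀ ⊆ W` a compact subgroup,
`S` a closed subsemigroup with `M₀ = S ∩ W₀ ∩ S⁻¹` a subgroup, and `exp ξᵢ ∈ S − W₀`
with `ξᵢ → 0` nonzero lying in a fixed complement `V₀` of `Lie(M₀)`. Then for any limit
direction `v` of `ξᵢ/‖ξᵢ‖`: the semigroup `{exp(tv) : t ≥ 0}` lies in `S`, and if
`exp(ℝv) ⊄ W₀` then `{exp(tv) : t ≥ 0} ⊄ W₀`. -/
theorem one_param_semigroup_escaping_compact_factor
    {E W : Type*} [NormedAddCommGroup E] [NormedSpace ℝ E]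
    [TopologicalSpace W] [Group W] [IsTopologicalGroup W] [T2Space W]
    (eExp : E → W) (hcont : Continuous eExp)
    (hpow : ∀ (m : ℕ) (ξ : E), eExp ((m : ℝ) • ξ) = eExp ξ ^ m)
    (hadd : ∀ (s t : ℝ) (u : E), eExp ((s + t) • u) = eExp (s • u) * eExp (t • u))
    (W₀ : Subgroup W) (hW₀ : IsCompact (W₀ : Set W))
    (S : Set W) (hScl : IsClosed S) (hSmul : ∀ a ∈ S, ∀ b ∈ S, a * b ∈ S)
    (M₀ : Subgroup W) (hM₀ : (M₀ : Set W) = S ∩ (W₀ : Set W) ∩ S⁻¹)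
    (V₀ : Submodule ℝ E)
    (ξ : ℕ → E) (hξV : ∀ i, ξ i ∈ V₀)
    (hξS : ∀ i, eExp (ξ i) ∈ S) (hξW₀ : ∀ i, eExp (ξ i) ∉ W₀)
    (hξ0 : Tendsto ξ atTop (nhds 0)) (hξne : ∀ i, ξ i ≠ 0)
    (v : E) (φ : ℕ → ℕ) (hφ : StrictMono φ)
    (hv : Tendsto (fun m => ‖ξ (φ m)‖⁻¹ • ξ (φ m)) atTop (nhds v)) :
    (∀ t : ℝ, 0 ≤ t → eExp (t • v) ∈ S) ∧
      ((¬ ∀ t : ℝ, eExp (t • v) ∈ W₀) → ¬ ∀ t : ℝ, 0 ≤ t → eExp (t • v) ∈ W₀) := by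
  -- eExp 0 = 1
  have hexp0 : eExp 0 = 1 := by
    have := hpow 0 0
    simpa using this
  -- 1 ∈ S
  have h1S : (1 : W) ∈ S := by
    have htend : Tendsto (fun i => eExp (ξ i)) atTop (nhds (1 : W)) := by
      simpa [hexp0, Function.comp_def] using (hcont.tendsto 0).comp hξ0
    exact hScl.mem_of_tendsto htend (Eventually.of_forall hξS)
  have hpowS : ∀ a ∈ S, ∀ n : ℕ, a ^ n ∈ S := by
    intro a ha n
    induction n with
    | zero => simpa using h1S
    | succ k ih => rw [pow_succ]; exact hSmul _ ih _ ha
  have hnorm0 : Tendsto (fun i => ‖ξ (φ i)‖) atTop (nhds 0) := by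
    have := (hξ0.comp hφ.tendsto_atTop)
    simpa using this.norm
  have hnormpos : ∀ i, 0 < ‖ξ (φ i)‖ := fun i => norm_pos_iff.mpr (hξne (φ i))
  have main : ∀ t : ℝ, 0 ≤ t → eExp (t • v) ∈ S := by
    intro t ht
    set n : ℕ → ℕ := fun i => ⌊t / ‖ξ (φ i)‖⌋₊ with hn
    have hprod : Tendsto (fun i => (n i : ℝ) * ‖ξ (φ i)‖) atTop (nhds t) := by
      have hle : ∀ i, (n i : ℝ) * ‖ξ (φ i)‖ ≤ t := by
        intro i
        have := Nat.floor_le (div_nonneg ht (hnormpos i).le)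
        calc (n i : ℝ) * ‖ξ (φ i)‖ ≤ (t / ‖ξ (φ i)‖) * ‖ξ (φ i)‖ :=
              mul_le_mul_of_nonneg_right this (hnormpos i).le
          _ = t := div_mul_cancel₀ _ (hnormpos i).ne'
      have hge : ∀ i, t - ‖ξ (φ i)‖ ≤ (n i : ℝ) * ‖ξ (φ i)‖ := by
        intro i
        have h1 : t / ‖ξ (φ i)‖ - 1 ≤ (n i : ℝ) := by
          have := Nat.lt_floor_add_one (t / ‖ξ (φ i)‖)
          linarith
        have := mul_le_mul_of_nonneg_right h1 (hnormpos i).le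
        calc t - ‖ξ (φ i)‖ = (t / ‖ξ (φ i)‖ - 1) * ‖ξ (φ i)‖ := by
              rw [sub_mul, div_mul_cancel₀ _ (hnormpos i).ne', one_mul]
          _ ≤ (n i : ℝ) * ‖ξ (φ i)‖ := this
      have hlow : Tendsto (fun i => t - ‖ξ (φ i)‖) atTop (nhds t) := by
        simpa using (tendsto_const_nhds.sub hnorm0)
      exact tendsto_of_tendsto_of_tendsto_of_le_of_le hlow tendsto_const_nhds hge hle
    have hsmul : Tendsto (fun i => (n i : ℝ) • ξ (φ i)) atTop (nhds (t • v)) := by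
      have heq : ∀ i, (n i : ℝ) • ξ (φ i)
          = ((n i : ℝ) * ‖ξ (φ i)‖) • (‖ξ (φ i)‖⁻¹ • ξ (φ i)) := by
        intro i
        rw [smul_smul, mul_assoc, mul_inv_cancel₀ (hnormpos i).ne', mul_one]
      simp only [heq]
      exact hprod.smul hv
    have hmem : ∀ i, eExp ((n i : ℝ) • ξ (φ i)) ∈ S := by
      intro i
      rw [hpow]
      exact hpowS _ (hξS (φ i)) _
    exact hScl.mem_of_tendsto ((hcont.tendsto _).comp hsmul) (Eventually.of_forall hmem)
  refine ⟨main, ?_⟩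
  intro hne hall
  apply hne
  intro t
  rcases le_or_gt 0 t with ht | ht
  · exact hall t ht
  · have h1 : eExp ((-t) • v) ∈ W₀ := hall (-t) (by linarith)
    have h2 : eExp (t • v) * eExp ((-t) • v) = 1 := by
      rw [← hadd]
      simpa using hexp0
    have : eExp (t • v) = (eExp ((-t) • v))⁻¹ := eq_inv_of_mul_eq_one_left (by
      rw [← hadd]; simpa using hexp0)
    rw [this]
    exact W₀.inv_mem h1
end

section
/- Let Γ₁ and Γ₂ be non-elementary convex cocompact discrete subgroups of G = Isom⁺(ℍ^d) with Γ₂ a normal subgroup of Γ₁. Then Γ₂ has finite index in Γ₁. -/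
open Matrix

/-- The Minkowski form matrix `J = diag(-1, 1, …, 1)` on `ℝ^{d+1}`. -/
noncomputable def minkMat (d : ℕ) : Matrix (Fin (d + 1)) (Fin (d + 1)) ℝ :=
  Matrix.diagonal fun i => if i = 0 then (-1 : ℝ) else 1

/-- The Minkowski bilinear form of signature `(d, 1)`. -/
noncomputable def mform (d : ℕ) (x y : Fin (d + 1) → ℝ) : ℝ :=
  x ⬝ᵥ (minkMat d).mulVec y

/-- The hyperboloid model of `ℍ^d`: the upper sheet of `⟨x,x⟩ = -1`. -/
def hypSet (d : ℕ) : Set (Fin (d + 1) → ℝ) := {x | mform d x x = -1 ∧ 0 < x 0}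

/-- `g ∈ Isom⁺(ℍ^d)`: `g` preserves the Minkowski form, has determinant `1`, and
preserves the upper sheet (so `g ∈ SO°(d,1)`). -/
def IsIsomPlus (d : ℕ) (g : Matrix.GeneralLinearGroup (Fin (d + 1)) ℝ) : Prop :=
  (∀ x y : Fin (d + 1) → ℝ,
      mform d ((g : Matrix (Fin (d + 1)) (Fin (d + 1)) ℝ).mulVec x)
        ((g : Matrix (Fin (d + 1)) (Fin (d + 1)) ℝ).mulVec y) = mform d x y) ∧
  (g : Matrix (Fin (d + 1)) (Fin (d + 1)) ℝ).det = 1 ∧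
  ∀ x ∈ hypSet d, (g : Matrix (Fin (d + 1)) (Fin (d + 1)) ℝ).mulVec x ∈ hypSet d

/-- A subset `C` of the hyperboloid is (geodesically) convex iff its radial cone is a
convex subset of `ℝ^{d+1}`. -/
def ConeConvex (d : ℕ) (C : Set (Fin (d + 1) → ℝ)) : Prop :=
  Convex ℝ {y | ∃ t : ℝ, 0 < t ∧ ∃ x ∈ C, y = t • x}

/-- `Γ` is convex cocompact: there is a nonempty closed convex `Γ`-invariant subset
`C ⊆ ℍ^d` on which `Γ` acts cocompactly (equivalently, the convex core of `Γ\ℍ^d` is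
compact). -/
def ConvexCocompact (d : ℕ) (Γ : Subgroup (Matrix.GeneralLinearGroup (Fin (d + 1)) ℝ)) :
    Prop :=
  ∃ C : Set (Fin (d + 1) → ℝ), C.Nonempty ∧ IsClosed C ∧ C ⊆ hypSet d ∧
    ConeConvex d C ∧
    (∀ g ∈ Γ, (fun x => (g : Matrix (Fin (d + 1)) (Fin (d + 1)) ℝ).mulVec x) '' C = C) ∧
    ∃ K : Set (Fin (d + 1) → ℝ), IsCompact K ∧ K ⊆ C ∧
      C ⊆ ⋃ g ∈ Γ, (fun x => (g : Matrix (Fin (d + 1)) (Fin (d + 1)) ℝ).mulVec x) '' K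

/-- `Γ` is non-elementary: it is not virtually cyclic, i.e. no cyclic subgroup has
finite index in `Γ` (for convex cocompact groups this is equivalent to the limit set
having at least `3` points). -/
def NonElementary {d : ℕ} (Γ : Subgroup (Matrix.GeneralLinearGroup (Fin (d + 1)) ℝ)) :
    Prop :=
  ∀ g : Matrix.GeneralLinearGroup (Fin (d + 1)) ℝ, (Subgroup.zpowers g).relIndex Γ = 0

namespace NCC

variable {d : ℕ}

/-- The (sign-flipped) Lorentz pairing. -/
noncomputable def B (d : ℕ) (x y : Fin (d + 1) → ℝ) : ℝ := -(mform d x y)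

/-- spatial part -/
noncomputable def sp (d : ℕ) (x y : Fin (d + 1) → ℝ) : ℝ :=
  ∑ i ∈ Finset.univ.erase 0, x i * y i

lemma B_eq (x y : Fin (d + 1) → ℝ) : B d x y = x 0 * y 0 - sp d x y := by
  unfold B mform sp
  rw [show (minkMat d).mulVec y = fun i => (if i = 0 then (-1:ℝ) else 1) * y i from
    funext fun i => Matrix.mulVec_diagonal _ _ i]
  unfold dotProduct
  rw [← Finset.sum_erase_add _ _ (Finset.mem_univ (0 : Fin (d+1)))]
  simp only [if_pos rfl]
  have : ∀ i ∈ Finset.univ.erase (0 : Fin (d+1)),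
      x i * ((if i = 0 then (-1:ℝ) else 1) * y i) = x i * y i := by
    intro i hi
    rw [if_neg (Finset.ne_of_mem_erase hi)]
    ring
  rw [Finset.sum_congr rfl this]
  norm_num
  ring

lemma sp_comm (x y : Fin (d + 1) → ℝ) : sp d x y = sp d y x := by
  unfold sp; exact Finset.sum_congr rfl fun i _ => mul_comm _ _

lemma B_comm (x y : Fin (d + 1) → ℝ) : B d x y = B d y x := by
  rw [B_eq, B_eq, sp_comm]; ring

lemma sp_add_right (x y z : Fin (d + 1) → ℝ) : sp d x (y + z) = sp d x y + sp d x z := by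
  unfold sp; rw [← Finset.sum_add_distrib]
  exact Finset.sum_congr rfl fun i _ => by simp [mul_add]

lemma sp_smul_right (a : ℝ) (x y : Fin (d + 1) → ℝ) : sp d x (a • y) = a * sp d x y := by
  unfold sp; rw [Finset.mul_sum]
  exact Finset.sum_congr rfl fun i _ => by simp [Pi.smul_apply]; ring

lemma B_add_right (x y z : Fin (d + 1) → ℝ) : B d x (y + z) = B d x y + B d x z := by
  rw [B_eq, B_eq, B_eq, sp_add_right]; simp [Pi.add_apply]; ring

lemma B_smul_right (a : ℝ) (x y : Fin (d + 1) → ℝ) : B d x (a • y) = a * B d x y := by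
  rw [B_eq, B_eq, sp_smul_right]; simp [Pi.smul_apply]; ring

lemma B_add_left (x y z : Fin (d + 1) → ℝ) : B d (x + y) z = B d x z + B d y z := by
  rw [B_comm, B_add_right, B_comm z x, B_comm z y]

lemma B_smul_left (a : ℝ) (x y : Fin (d + 1) → ℝ) : B d (a • x) y = a * B d x y := by
  rw [B_comm, B_smul_right, B_comm]

lemma B_sub_right (x y z : Fin (d + 1) → ℝ) : B d x (y - z) = B d x y - B d x z := by
  have : y - z = y + (-1 : ℝ) • z := by funext i; simp; ring
  rw [this, B_add_right, B_smul_right]; ring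

lemma B_sub_left (x y z : Fin (d + 1) → ℝ) : B d (x - y) z = B d x z - B d y z := by
  rw [B_comm, B_sub_right, B_comm z x, B_comm z y]

lemma sp_self_nonneg (x : Fin (d + 1) → ℝ) : 0 ≤ sp d x x :=
  Finset.sum_nonneg fun i _ => mul_self_nonneg _

lemma sp_cs (x y : Fin (d + 1) → ℝ) : (sp d x y) ^ 2 ≤ sp d x x * sp d y y := by
  have h := Finset.sum_mul_sq_le_sq_mul_sq (Finset.univ.erase (0 : Fin (d+1))) x y
  unfold sp
  calc (∑ i ∈ Finset.univ.erase (0:Fin (d+1)), x i * y i)^2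
      ≤ (∑ i ∈ Finset.univ.erase (0:Fin (d+1)), x i ^2) * ∑ i ∈ Finset.univ.erase (0:Fin (d+1)), y i ^2 := h
    _ = (∑ i ∈ Finset.univ.erase (0:Fin (d+1)), x i * x i) * ∑ i ∈ Finset.univ.erase (0:Fin (d+1)), y i * y i := by
        rw [Finset.sum_congr rfl fun i _ => sq (x i), Finset.sum_congr rfl fun i _ => sq (y i)]

-- hyperboloid facts
lemma hyp_B_self {x : Fin (d + 1) → ℝ} (hx : x ∈ hypSet d) : B d x x = 1 := by
  have := hx.1; unfold B; rw [this]; ring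

lemma hyp_sp_self {x : Fin (d + 1) → ℝ} (hx : x ∈ hypSet d) : sp d x x = x 0 * x 0 - 1 := by
  have h := hyp_B_self hx; rw [B_eq] at h; linarith

lemma hyp_x0_ge_one {x : Fin (d + 1) → ℝ} (hx : x ∈ hypSet d) : 1 ≤ x 0 := by
  have h := hyp_sp_self hx
  have h2 := sp_self_nonneg (d := d) x
  nlinarith [hx.2]

lemma B_ge_one {x y : Fin (d + 1) → ℝ} (hx : x ∈ hypSet d) (hy : y ∈ hypSet d) :
    1 ≤ B d x y := by
  have hcs := sp_cs (d := d) x y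
  have hx0 := hyp_x0_ge_one hx
  have hy0 := hyp_x0_ge_one hy
  rw [hyp_sp_self hx, hyp_sp_self hy] at hcs
  rw [B_eq]
  have key : (sp d x y) ^ 2 ≤ (x 0 * y 0 - 1) ^ 2 := by nlinarith [sq_nonneg (x 0 - y 0)]
  have h3 : (0:ℝ) ≤ x 0 * y 0 - 1 := by nlinarith
  have h4 : sp d x y ≤ x 0 * y 0 - 1 := by nlinarith [key, h3]
  linarith

lemma B_pos {x y : Fin (d + 1) → ℝ} (hx : x ∈ hypSet d) (hy : y ∈ hypSet d) :
    0 < B d x y := lt_of_lt_of_le one_pos (B_ge_one hx hy)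

lemma B_eq_one_iff {x y : Fin (d + 1) → ℝ} (hx : x ∈ hypSet d) (hy : y ∈ hypSet d)
    (h : B d x y = 1) : x = y := by
  have hcs := sp_cs (d := d) x y
  have hx0 := hyp_x0_ge_one hx
  have hy0 := hyp_x0_ge_one hy
  have hxx := hyp_sp_self hx
  have hyy := hyp_sp_self hy
  have hB := B_eq (d := d) x y
  rw [h] at hB
  -- sp x y = x0 y0 - 1
  have hsp : sp d x y = x 0 * y 0 - 1 := by linarith
  have h0 : x 0 = y 0 := by nlinarith [sq_nonneg (x 0 - y 0)]
  -- sum of squares of differences is zero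
  have hzero : ∑ i ∈ Finset.univ.erase (0 : Fin (d+1)), (x i - y i) * (x i - y i) = 0 := by
    have expand : ∑ i ∈ Finset.univ.erase (0 : Fin (d+1)), (x i - y i) * (x i - y i)
        = sp d x x + sp d y y - 2 * sp d x y := by
      unfold sp
      rw [Finset.mul_sum, ← Finset.sum_add_distrib, ← Finset.sum_sub_distrib]
      exact Finset.sum_congr rfl fun i _ => by ring
    rw [expand, hxx, hyy, hsp, h0]; ring
  have hall : ∀ i ∈ Finset.univ.erase (0 : Fin (d+1)), (x i - y i) * (x i - y i) = 0 := by
    intro i hi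
    exact (Finset.sum_eq_zero_iff_of_nonneg (fun j _ => mul_self_nonneg _)).1 hzero i hi
  funext i
  by_cases hi : i = 0
  · rw [hi]; exact h0
  · have := hall i (Finset.mem_erase.2 ⟨hi, Finset.mem_univ i⟩)
    have : x i - y i = 0 := by nlinarith [this]
    linarith

/-- reverse Cauchy–Schwarz : if `u` is timelike then `B u u * B v v ≤ (B u v)^2`. -/
lemma revCS {u : Fin (d + 1) → ℝ} (hu : 0 < B d u u) (v : Fin (d + 1) → ℝ) :
    B d u u * B d v v ≤ (B d u v) ^ 2 := by
  have hu0 : u 0 ≠ 0 := by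
    intro h
    have := B_eq (d := d) u u
    rw [h] at this
    nlinarith [sp_self_nonneg (d := d) u]
  set lam := v 0 / u 0 with hlam
  set w := v - lam • u with hw
  have hw0 : w 0 = 0 := by
    simp [hw, hlam, Pi.sub_apply, Pi.smul_apply]
    field_simp
    ring
  have hwnp : B d w w ≤ 0 := by
    rw [B_eq, hw0]
    simp
    exact sp_self_nonneg w
  have hexp : B d w w = B d v v - 2 * lam * B d u v + lam ^ 2 * B d u u := by
    rw [hw, B_sub_left, B_sub_right, B_sub_right, B_smul_left, B_smul_right,
      B_smul_left, B_smul_right, B_comm v u]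
    ring
  nlinarith [sq_nonneg (B d u u * lam - B d u v)]

lemma perp_nonpos {u w : Fin (d + 1) → ℝ} (hu : B d u u = 1) (h : B d w u = 0) :
    B d w w ≤ 0 := by
  by_contra hc
  push_neg at hc
  have := revCS (d := d) hc u
  rw [h, hu] at this
  nlinarith

/-- projected Cauchy–Schwarz. -/
lemma projCS {u : Fin (d + 1) → ℝ} (hu : B d u u = 1) (a b : Fin (d + 1) → ℝ) :
    (B d a b - B d a u * B d b u) ^ 2 ≤
      ((B d a u) ^ 2 - B d a a) * ((B d b u) ^ 2 - B d b b) := by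
  set ab := a - (B d a u) • u with hab
  set bb := b - (B d b u) • u with hbb
  have hperp_a : B d ab u = 0 := by
    rw [hab, B_sub_left, B_smul_left, hu]; ring
  have hperp_b : B d bb u = 0 := by
    rw [hbb, B_sub_left, B_smul_left, hu]; ring
  have key : ∀ t : ℝ, 0 ≤ (-(B d bb bb)) * (t * t) + (-(2 * B d ab bb)) * t + (-(B d ab ab)) := by
    intro t
    have hperp : B d (ab + t • bb) u = 0 := by
      rw [B_add_left, B_smul_left, hperp_a, hperp_b]; ring
    have hnp := perp_nonpos hu hperp
    have hexp : B d (ab + t • bb) (ab + t • bb)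
        = B d ab ab + 2 * t * B d ab bb + t ^ 2 * B d bb bb := by
      rw [B_add_left, B_add_right, B_add_right, B_smul_left, B_smul_right, B_smul_left,
        B_smul_right, B_comm bb ab]
      ring
    nlinarith
  have hd := discrim_le_zero key
  unfold discrim at hd
  have expand_ab : B d ab bb = B d a b - B d a u * B d b u := by
    rw [hab, hbb, B_sub_left, B_sub_right, B_sub_right, B_smul_left, B_smul_right,
      B_smul_left, B_smul_right, B_comm b u, hu]
    ring
  have expand_aa : B d ab ab = B d a a - (B d a u) ^ 2 := by
    rw [hab, B_sub_left, B_sub_right, B_sub_right, B_smul_left, B_smul_right,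
      B_smul_left, B_smul_right, B_comm a u, hu]
    ring
  have expand_bbb : B d bb bb = B d b b - (B d b u) ^ 2 := by
    rw [hbb, B_sub_left, B_sub_right, B_sub_right, B_smul_left, B_smul_right,
      B_smul_left, B_smul_right, B_comm b u, hu]
    ring
  rw [expand_ab, expand_aa, expand_bbb] at hd
  nlinarith [hd]

/-- triangle-type inequality. -/
lemma B_tri {x y z : Fin (d + 1) → ℝ} (hx : x ∈ hypSet d) (hy : y ∈ hypSet d)
    (hz : z ∈ hypSet d) : B d x z ≤ 2 * (B d x y * B d y z) := by
  have h := projCS (hyp_B_self hy) x z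
  rw [hyp_B_self hx, hyp_B_self hz] at h
  have h1 := B_ge_one hx hy
  have h2 := B_ge_one hz hy
  rw [B_comm y z]
  have hP : (1:ℝ) ≤ B d x y * B d z y := by nlinarith
  have h5 : (B d x z - B d x y * B d z y) ^ 2 ≤ (B d x y * B d z y) ^ 2 := by nlinarith
  nlinarith [h5, hP]

end NCC

namespace NCC

variable {d : ℕ}

/-- If `β t + α t² ≥ 0` for all small positive `t`, then `β ≥ 0`. -/
lemma coeff_nonneg {α β : ℝ} (h : ∀ t : ℝ, 0 < t → t < 1 → 0 ≤ β * t + α * t ^ 2) :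
    0 ≤ β := by
  by_contra hb
  push_neg at hb
  set t := min (1/2 : ℝ) (-β / (2 * (|α| + 1))) with ht
  have habs : (0:ℝ) ≤ |α| := abs_nonneg α
  have hden : (0:ℝ) < 2 * (|α| + 1) := by linarith
  have ht0 : 0 < t := lt_min (by norm_num) (div_pos (by linarith) hden)
  have ht1 : t < 1 := lt_of_le_of_lt (min_le_left _ _) (by norm_num)
  have ht2 : t ≤ -β / (2 * (|α| + 1)) := min_le_right _ _
  have h1 := h t ht0 ht1
  have hαt : α * t ≤ |α| * t := by
    have := le_abs_self α
    nlinarith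
  have h2 : |α| * t ≤ |α| * (-β / (2 * (|α| + 1))) := by
    apply mul_le_mul_of_nonneg_left ht2 habs
  have h3 : |α| * (-β / (2 * (|α| + 1))) ≤ -β / 2 := by
    rw [← mul_div_assoc, div_le_div_iff₀ hden (by norm_num : (0:ℝ) < 2)]
    nlinarith
  have h4 : β + α * t < 0 := by nlinarith
  nlinarith [mul_pos ht0 (neg_pos.2 h4)]

/-- Key convexity estimate. -/
lemma corner {W : Set (Fin (d + 1) → ℝ)} (hW : W ⊆ hypSet d)
    (hconv : Convex ℝ {v | ∃ t : ℝ, 0 < t ∧ ∃ x ∈ W, v = t • x})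
    {y₁ y₂ z : Fin (d + 1) → ℝ} (hy₁ : y₁ ∈ W) (hy₂ : y₂ ∈ W)
    {m : ℝ} (hm : 0 < m) (hmin : ∀ w ∈ W, m ≤ B d z w) (heq : B d z y₂ = m) :
    m * B d y₁ y₂ ≤ B d z y₁ := by
  set c := B d z y₁ with hc
  set s := B d y₁ y₂ with hs
  have hkey : ∀ t : ℝ, 0 < t → t < 1 →
      0 ≤ (2 * m * (c - m) - 2 * m ^ 2 * (s - 1)) * t
          + ((c - m) ^ 2 + 2 * m ^ 2 * (s - 1)) * t ^ 2 := by
    intro t ht0 ht1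
    have hmem₁ : y₁ ∈ {v | ∃ t : ℝ, 0 < t ∧ ∃ x ∈ W, v = t • x} :=
      ⟨1, one_pos, y₁, hy₁, (one_smul ℝ y₁).symm⟩
    have hmem₂ : y₂ ∈ {v | ∃ t : ℝ, 0 < t ∧ ∃ x ∈ W, v = t • x} :=
      ⟨1, one_pos, y₂, hy₂, (one_smul ℝ y₂).symm⟩
    have hv := hconv hmem₁ hmem₂ (le_of_lt ht0) (by linarith : (0:ℝ) ≤ 1 - t) (by ring)
    obtain ⟨σ, hσ, w, hwW, hvw⟩ := hv
    have hBzv : B d z (t • y₁ + (1 - t) • y₂) = t * c + (1 - t) * m := by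
      rw [B_add_right, B_smul_right, B_smul_right, heq, hc]
    have hBvv : B d (t • y₁ + (1 - t) • y₂) (t • y₁ + (1 - t) • y₂)
        = t ^ 2 + (1 - t) ^ 2 + 2 * t * (1 - t) * s := by
      rw [B_add_right, B_add_left, B_add_left, B_smul_left, B_smul_right, B_smul_left,
        B_smul_right, B_smul_left, B_smul_right, B_smul_left, B_smul_right,
        hyp_B_self (hW hy₁), hyp_B_self (hW hy₂), B_comm y₂ y₁, hs]
      ring
    have hw1 : B d w w = 1 := hyp_B_self (hW hwW)
    have hBzw : m ≤ B d z w := hmin w hwW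
    have e1 : t * c + (1 - t) * m = σ * B d z w := by
      rw [← hBzv, hvw, B_smul_right]
    have e2 : t ^ 2 + (1 - t) ^ 2 + 2 * t * (1 - t) * s = σ ^ 2 := by
      rw [← hBvv, hvw, B_smul_left, B_smul_right, hw1]; ring
    have hge : σ * m ≤ t * c + (1 - t) * m := by
      rw [e1]; exact mul_le_mul_of_nonneg_left hBzw (le_of_lt hσ)
    have hσm : 0 ≤ σ * m := le_of_lt (mul_pos hσ hm)
    have hsq : (σ * m) ^ 2 ≤ (t * c + (1 - t) * m) ^ 2 := by nlinarith [hge, hσm]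
    have hmid : m ^ 2 * (t ^ 2 + (1 - t) ^ 2 + 2 * t * (1 - t) * s)
        ≤ (t * c + (1 - t) * m) ^ 2 := by
      rw [e2]; nlinarith [hsq]
    nlinarith [hmid]
  have := coeff_nonneg hkey
  nlinarith [this, hm]

/-- The purely arithmetic contradiction underlying uniqueness of the minimizing
pair. -/
lemma arith_contra {m s r c₁ c₂ : ℝ} (hm : 1 < m) (hs : 1 < s) (hr : 1 ≤ r)
    (hrs : r ≤ s) (hb₁ : m * s ≤ c₁) (hb₂ : m * s ≤ c₂)
    (he₁ : (c₁ - m * s) ^ 2 ≤ (m ^ 2 - 1) * (s ^ 2 - 1))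
    (he₂ : (c₂ - m * s) ^ 2 ≤ (m ^ 2 - 1) * (s ^ 2 - 1))
    (hL1 : (4 + 2 * r + 2 * s + 4 * m + 2 * c₁ + 2 * c₂)
            * (4 - 2 * r - 2 * s - 4 * m + 2 * c₁ + 2 * c₂)
          ≤ (2 * (c₂ - c₁)) ^ 2) : False := by
  have hqb : (c₂ - c₁) ^ 2 ≤ (m ^ 2 - 1) * (s ^ 2 - 1) := by
    rcases le_total c₁ c₂ with hcc | hcc
    · nlinarith [he₂, hb₁]
    · nlinarith [he₁, hb₂]
  have hNge : 4 * ((s - 1) * (m - 1)) ≤ 4 - 2 * r - 2 * s - 4 * m + 2 * c₁ + 2 * c₂ := by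
    nlinarith
  have hNpos : (0:ℝ) < 4 * ((s - 1) * (m - 1)) := by nlinarith
  have hPge : 6 + 2 * s + 4 * m + 4 * (m * s)
      ≤ 4 + 2 * r + 2 * s + 4 * m + 2 * c₁ + 2 * c₂ := by nlinarith
  have hPpos : (0:ℝ) < 6 + 2 * s + 4 * m + 4 * (m * s) := by nlinarith
  have hprod : (6 + 2 * s + 4 * m + 4 * (m * s)) * (4 * ((s - 1) * (m - 1)))
      ≤ (4 + 2 * r + 2 * s + 4 * m + 2 * c₁ + 2 * c₂)
        * (4 - 2 * r - 2 * s - 4 * m + 2 * c₁ + 2 * c₂) :=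
    mul_le_mul hPge hNge (le_of_lt hNpos) (by nlinarith)
  have hkey : 4 * ((m ^ 2 - 1) * (s ^ 2 - 1))
      < (6 + 2 * s + 4 * m + 4 * (m * s)) * (4 * ((s - 1) * (m - 1))) := by
    nlinarith [mul_pos (mul_pos (sub_pos.2 hs) (sub_pos.2 hm))
      (by nlinarith : (0:ℝ) < 5 + s + 3 * m + 3 * (m * s))]
  nlinarith [hqb, hprod, hkey, hL1]

/-- Asymmetric core of uniqueness of the minimizing pair. -/
lemma pair_unique_aux {A Bs : Set (Fin (d + 1) → ℝ)} (hA : A ⊆ hypSet d)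
    (hB : Bs ⊆ hypSet d)
    (hBc : Convex ℝ {v | ∃ t : ℝ, 0 < t ∧ ∃ x ∈ Bs, v = t • x})
    {m : ℝ} (hm : 1 < m)
    (hmin : ∀ a ∈ A, ∀ b ∈ Bs, m ≤ B d a b)
    {x x' y y' : Fin (d + 1) → ℝ} (hx : x ∈ A) (hx' : x' ∈ A) (hy : y ∈ Bs) (hy' : y' ∈ Bs)
    (hxy : B d x y = m) (hx'y' : B d x' y' = m)
    (hrs : B d x x' ≤ B d y y') : B d y y' ≤ 1 := by
  by_contra hs1
  push_neg at hs1
  have hr1 : 1 ≤ B d x x' := B_ge_one (hA hx) (hA hx')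
  have hm0 : (0:ℝ) < m := by linarith
  have hb₁ : m * B d y y' ≤ B d x' y := by
    have := corner hB hBc hy hy' hm0 (fun w hw => hmin x' hx' w hw) hx'y'
    exact this
  have hb₂ : m * B d y y' ≤ B d x y' := by
    have := corner hB hBc hy' hy hm0 (fun w hw => hmin x hx w hw) hxy
    rw [B_comm y' y] at this
    exact this
  have he₁ : (B d x' y - m * B d y y') ^ 2 ≤ (m ^ 2 - 1) * ((B d y y') ^ 2 - 1) := by
    have h := projCS (hyp_B_self (hB hy')) x' y
    rw [hyp_B_self (hA hx')] at h
    rw [hyp_B_self (hB hy)] at h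
    rw [hx'y'] at h
    rw [B_comm y y'] at h
    -- h now in terms of B d y' y; normalize
    calc (B d x' y - m * B d y y') ^ 2
        = (B d x' y - m * B d y' y) ^ 2 := by rw [B_comm y y']
      _ ≤ (m ^ 2 - 1) * ((B d y' y) ^ 2 - 1) := h
      _ = (m ^ 2 - 1) * ((B d y y') ^ 2 - 1) := by rw [B_comm y' y]
  have he₂ : (B d x y' - m * B d y y') ^ 2 ≤ (m ^ 2 - 1) * ((B d y y') ^ 2 - 1) := by
    have h := projCS (hyp_B_self (hB hy)) x y'
    rw [hyp_B_self (hA hx)] at h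
    rw [hyp_B_self (hB hy')] at h
    rw [hxy] at h
    calc (B d x y' - m * B d y y') ^ 2
        = (B d x y' - m * B d y' y) ^ 2 := by rw [B_comm y y']
      _ ≤ (m ^ 2 - 1) * ((B d y' y) ^ 2 - 1) := h
      _ = (m ^ 2 - 1) * ((B d y y') ^ 2 - 1) := by rw [B_comm y' y]
  -- expansions of the two test vectors
  have hP : B d (x + x' + y + y') (x + x' + y + y')
      = 4 + 2 * B d x x' + 2 * B d y y' + 4 * m + 2 * B d x' y + 2 * B d x y' := by
    simp only [B_add_left, B_add_right]
    simp only [B_comm x' x, B_comm y x, B_comm y x', B_comm y' x, B_comm y' x',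
      B_comm y' y]
    rw [hyp_B_self (hA hx), hyp_B_self (hA hx'), hyp_B_self (hB hy), hyp_B_self (hB hy'),
      hxy, hx'y']
    ring
  have hN : B d ((x + y') - (x' + y)) ((x + y') - (x' + y))
      = 4 - 2 * B d x x' - 2 * B d y y' - 4 * m + 2 * B d x' y + 2 * B d x y' := by
    simp only [B_sub_left, B_sub_right, B_add_left, B_add_right]
    simp only [B_comm x' x, B_comm y x, B_comm y x', B_comm y' x, B_comm y' x',
      B_comm y' y]
    rw [hyp_B_self (hA hx), hyp_B_self (hA hx'), hyp_B_self (hB hy), hyp_B_self (hB hy'),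
      hxy, hx'y']
    ring
  have hq : B d (x + x' + y + y') ((x + y') - (x' + y)) = 2 * (B d x y' - B d x' y) := by
    simp only [B_sub_left, B_sub_right, B_add_left, B_add_right]
    simp only [B_comm x' x, B_comm y x, B_comm y x', B_comm y' x, B_comm y' x',
      B_comm y' y]
    rw [hyp_B_self (hA hx), hyp_B_self (hA hx'), hyp_B_self (hB hy), hyp_B_self (hB hy'),
      hxy, hx'y']
    ring
  have hPpos : 0 < B d (x + x' + y + y') (x + x' + y + y') := by
    rw [hP]; nlinarith
  have hL1 := revCS hPpos ((x + y') - (x' + y))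
  rw [hP, hN, hq] at hL1
  exact arith_contra hm hs1 hr1 hrs hb₁ hb₂ he₁ he₂ (by nlinarith [hL1])

/-- Uniqueness of the minimizing pair. -/
lemma pair_unique {A Bs : Set (Fin (d + 1) → ℝ)} (hA : A ⊆ hypSet d)
    (hB : Bs ⊆ hypSet d)
    (hAc : Convex ℝ {v | ∃ t : ℝ, 0 < t ∧ ∃ x ∈ A, v = t • x})
    (hBc : Convex ℝ {v | ∃ t : ℝ, 0 < t ∧ ∃ x ∈ Bs, v = t • x})
    {m : ℝ} (hm : 1 < m)
    (hmin : ∀ a ∈ A, ∀ b ∈ Bs, m ≤ B d a b)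
    {x x' y y' : Fin (d + 1) → ℝ} (hx : x ∈ A) (hx' : x' ∈ A) (hy : y ∈ Bs) (hy' : y' ∈ Bs)
    (hxy : B d x y = m) (hx'y' : B d x' y' = m) : x = x' ∧ y = y' := by
  have hmin' : ∀ b ∈ Bs, ∀ a ∈ A, m ≤ B d b a := fun b hb a ha => by
    rw [B_comm]; exact hmin a ha b hb
  have hr1 : 1 ≤ B d x x' := B_ge_one (hA hx) (hA hx')
  have hs1 : 1 ≤ B d y y' := B_ge_one (hB hy) (hB hy')
  rcases le_total (B d x x') (B d y y') with hrs | hrs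
  · have hs := pair_unique_aux hA hB hBc hm hmin hx hx' hy hy' hxy hx'y' hrs
    have hyeq : y = y' := B_eq_one_iff (hB hy) (hB hy') (le_antisymm hs hs1)
    have hr : B d x x' ≤ 1 := le_trans hrs hs
    exact ⟨B_eq_one_iff (hA hx) (hA hx') (le_antisymm hr hr1), hyeq⟩
  · have hs := pair_unique_aux hB hA hAc hm hmin' hy hy' hx hx'
      (by rw [B_comm]; exact hxy) (by rw [B_comm]; exact hx'y') hrs
    have hxeq : x = x' := B_eq_one_iff (hA hx) (hA hx') (le_antisymm hs hr1)
    have hsle : B d y y' ≤ 1 := le_trans hrs hs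
    exact ⟨hxeq, B_eq_one_iff (hB hy) (hB hy') (le_antisymm hsle hs1)⟩

end NCC

namespace NCC

open Topology

variable {d : ℕ}

lemma continuous_B2 : Continuous (fun q : ((Fin (d+1) → ℝ) × (Fin (d+1) → ℝ)) => B d q.1 q.2) := by
  have : (fun q : ((Fin (d+1) → ℝ) × (Fin (d+1) → ℝ)) => B d q.1 q.2)
      = fun q => q.1 0 * q.2 0 - ∑ i ∈ Finset.univ.erase 0, q.1 i * q.2 i := by
    funext q; rw [B_eq]; rfl
  rw [this]
  apply Continuous.sub
  · exact ((continuous_apply 0).comp continuous_fst).mul ((continuous_apply 0).comp continuous_snd)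
  · apply continuous_finset_sum
    intro i _
    exact ((continuous_apply i).comp continuous_fst).mul ((continuous_apply i).comp continuous_snd)

lemma continuous_B_right (p : Fin (d+1) → ℝ) : Continuous (fun x => B d p x) :=
  continuous_B2.comp (Continuous.prodMk_right p)

lemma isClosed_hypSet : IsClosed (hypSet d) := by
  have : hypSet d = {x : Fin (d+1) → ℝ | mform d x x = -1} ∩ {x | 1 ≤ x 0} := by
    ext x
    constructor
    · intro hx; exact ⟨hx.1, hyp_x0_ge_one hx⟩
    · intro hx; exact ⟨hx.1, lt_of_lt_of_le one_pos hx.2⟩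
  rw [this]
  apply IsClosed.inter
  · have hc : Continuous (fun x : Fin (d+1) → ℝ => mform d x x) := by
      have : (fun x : Fin (d+1) → ℝ => mform d x x) = fun x => -(B d x x) := by
        funext x; unfold B; ring
      rw [this]
      exact (continuous_B2.comp (continuous_id.prodMk continuous_id)).neg
    exact isClosed_eq hc continuous_const
  · exact isClosed_le continuous_const (continuous_apply 0)

lemma abs_le_of_sq (a b : ℝ) (h : a ^ 2 ≤ b ^ 2) (hb : 0 ≤ b) : -b ≤ a ∧ a ≤ b := by
  constructor <;> nlinarith [sq_nonneg (a + b), sq_nonneg (a - b)]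

/-- "balls" around `p` within the hyperboloid are compact -/
lemma isCompact_hypBall {p : Fin (d+1) → ℝ} (hp : p ∈ hypSet d) (R : ℝ) :
    IsCompact {x | x ∈ hypSet d ∧ B d p x ≤ R} := by
  set R' := max R 1 with hR'
  have hR1 : (1:ℝ) ≤ R' := le_max_right _ _
  set ρ := 2 * R' * p 0 with hρ
  have hp0 : 1 ≤ p 0 := hyp_x0_ge_one hp
  have hρ0 : 0 ≤ ρ := by nlinarith
  apply IsCompact.of_isClosed_subset
    (isCompact_univ_pi (fun i : Fin (d+1) => isCompact_Icc (a := -ρ) (b := ρ)))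
  · exact IsClosed.inter isClosed_hypSet (isClosed_le (continuous_B_right p) continuous_const)
  · intro x hx
    obtain ⟨hxh, hxB⟩ := hx
    have hx0 : 1 ≤ x 0 := hyp_x0_ge_one hxh
    have hcs := sp_cs (d := d) p x
    rw [hyp_sp_self hp, hyp_sp_self hxh] at hcs
    have hB := B_eq (d := d) p x
    -- bound x 0
    have hx0b : x 0 ≤ ρ := by
      by_contra hcon
      push_neg at hcon
      have h1 : p 0 * x 0 - sp d p x ≤ R' := by
        have : B d p x ≤ R' := le_trans hxB (le_max_left _ _)
        linarith [hB ▸ this]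
      have h3 : 0 ≤ p 0 * x 0 - R' := by nlinarith
      have h2 : p 0 * x 0 - R' ≤ sp d p x := by linarith
      have h4 : (p 0 * x 0 - R') ^ 2 ≤ (sp d p x) ^ 2 := by
        exact pow_le_pow_left₀ h3 h2 2
      have h5 : 2 * R' * p 0 * x 0 < x 0 * x 0 :=
        mul_lt_mul_of_pos_right hcon (by linarith)
      nlinarith [hcs, h4, h5]
    rw [Set.mem_univ_pi]
    intro i
    by_cases hi : i = 0
    · subst hi
      exact ⟨by linarith, hx0b⟩
    · have hsingle : (x i) ^ 2 ≤ sp d x x := by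
        have : (x i) ^ 2 = x i * x i := sq (x i)
        rw [this]
        unfold sp
        exact Finset.single_le_sum (fun j _ => mul_self_nonneg (x j))
          (Finset.mem_erase.2 ⟨hi, Finset.mem_univ i⟩)
      rw [hyp_sp_self hxh] at hsingle
      have hsq : (x i) ^ 2 ≤ ρ ^ 2 := by nlinarith
      exact abs_le_of_sq _ _ hsq hρ0

end NCC

namespace NCC

open Topology

variable {d : ℕ}

/-- the basepoint `e₀` -/
def e0 (d : ℕ) : Fin (d + 1) → ℝ := fun i => if i = 0 then 1 else 0

lemma sp_e0_right (x : Fin (d+1) → ℝ) : sp d x (e0 d) = 0 := by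
  unfold sp e0
  apply Finset.sum_eq_zero
  intro i hi
  rw [if_neg (Finset.ne_of_mem_erase hi)]
  ring

lemma B_e0_right (x : Fin (d+1) → ℝ) : B d x (e0 d) = x 0 := by
  rw [B_eq, sp_e0_right]
  unfold e0
  norm_num

lemma e0_mem : e0 d ∈ hypSet d := by
  constructor
  · have h : B d (e0 d) (e0 d) = 1 := by rw [B_e0_right]; unfold e0; norm_num
    unfold B at h
    linarith
  · unfold e0; norm_num

/-- standard basis vectors -/
def bvec (d : ℕ) (i : Fin (d + 1)) : Fin (d + 1) → ℝ := fun k => if k = i then 1 else 0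

lemma mulVec_bvec (A : Matrix (Fin (d+1)) (Fin (d+1)) ℝ) (i : Fin (d+1)) :
    A.mulVec (bvec d i) = fun j => A j i := by
  funext j
  unfold bvec Matrix.mulVec dotProduct
  simp [mul_ite]

lemma bvec_zero : bvec d 0 = e0 d := rfl

lemma sp_bvec_e0 (i : Fin (d+1)) : sp d (bvec d i) (e0 d) = 0 := sp_e0_right _

lemma B_bvec_e0 {i : Fin (d+1)} (hi : i ≠ 0) : B d (bvec d i) (e0 d) = 0 := by
  rw [B_e0_right]
  unfold bvec
  rw [if_neg (by exact fun h => hi (by exact h ▸ rfl))]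

lemma sp_bvec_self {i : Fin (d+1)} (hi : i ≠ 0) : sp d (bvec d i) (bvec d i) = 1 := by
  unfold sp bvec
  have : ∀ k ∈ Finset.univ.erase (0 : Fin (d+1)),
      (if k = i then (1:ℝ) else 0) * (if k = i then 1 else 0) = if k = i then 1 else 0 := by
    intro k _; by_cases h : k = i <;> simp [h]
  rw [Finset.sum_congr rfl this, Finset.sum_ite_eq' (Finset.univ.erase 0) i (fun _ => (1:ℝ))]
  rw [if_pos (Finset.mem_erase.2 ⟨hi, Finset.mem_univ i⟩)]

lemma B_bvec_self {i : Fin (d+1)} (hi : i ≠ 0) : B d (bvec d i) (bvec d i) = -1 := by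
  rw [B_eq, sp_bvec_self hi]
  unfold bvec
  rw [if_neg (by exact fun h => hi (by exact h ▸ rfl))]
  ring

lemma B_iso {g : Matrix.GeneralLinearGroup (Fin (d+1)) ℝ} (hg : IsIsomPlus d g)
    (x y : Fin (d+1) → ℝ) :
    B d ((g : Matrix (Fin (d+1)) (Fin (d+1)) ℝ).mulVec x)
      ((g : Matrix (Fin (d+1)) (Fin (d+1)) ℝ).mulVec y) = B d x y := by
  unfold B
  rw [hg.1]

/-- From a bound on the displacement of `e₀` we get bounds on all matrix entries. -/
lemma entries_bound {g : Matrix.GeneralLinearGroup (Fin (d+1)) ℝ} (hgI : IsIsomPlus d g)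
    {E1 : ℝ} (hE1 : 1 ≤ E1)
    (hge0 : B d ((g : Matrix (Fin (d+1)) (Fin (d+1)) ℝ).mulVec (e0 d)) (e0 d) ≤ E1) :
    ∀ i j, |(g : Matrix (Fin (d+1)) (Fin (d+1)) ℝ) i j| ≤ E1 + 1 := by
  set A := (g : Matrix (Fin (d+1)) (Fin (d+1)) ℝ) with hA
  set col0 := A.mulVec (e0 d) with hcol0
  have hcol0hyp : col0 ∈ hypSet d := hgI.2.2 _ e0_mem
  have hc00 : col0 0 ≤ E1 := by rw [← B_e0_right col0]; exact hge0
  have hc00ge : 1 ≤ col0 0 := hyp_x0_ge_one hcol0hyp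
  have hspcol : sp d col0 col0 = col0 0 * col0 0 - 1 := hyp_sp_self hcol0hyp
  have hcol_entry : ∀ j, |col0 j| ≤ E1 := by
    intro j
    by_cases hj : j = 0
    · subst hj
      rw [abs_of_nonneg (by linarith)]
      exact hc00
    · have h1 : (col0 j) ^ 2 ≤ sp d col0 col0 := by
        rw [sq]
        unfold sp
        exact Finset.single_le_sum (fun k _ => mul_self_nonneg (col0 k))
          (Finset.mem_erase.2 ⟨hj, Finset.mem_univ j⟩)
      have h2 : (col0 j) ^ 2 ≤ E1 ^ 2 := by nlinarith
      have := abs_le_of_sq _ _ h2 (by linarith)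
      exact abs_le.2 ⟨this.1, this.2⟩
  intro i j
  by_cases hj : j = 0
  · subst hj
    have : A i 0 = col0 i := by rw [hcol0, ← bvec_zero, mulVec_bvec]
    rw [this]
    exact le_trans (hcol_entry i) (by linarith)
  · -- column j, j ≠ 0
    set u := A.mulVec (bvec d j) with hu
    have hui : u = fun k => A k j := mulVec_bvec A j
    have hBuu : B d u u = -1 := by
      rw [hu]
      unfold B
      rw [hgI.1]
      have : B d (bvec d j) (bvec d j) = -1 := B_bvec_self hj
      unfold B at this
      linarith
    have hBucol : B d u col0 = 0 := by
      rw [hu, hcol0]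
      unfold B
      rw [hgI.1]
      have : B d (bvec d j) (e0 d) = 0 := B_bvec_e0 hj
      unfold B at this
      linarith
    -- relations
    have hr1 : u 0 * col0 0 = sp d u col0 := by
      have := B_eq (d := d) u col0
      rw [hBucol] at this
      linarith
    have hr2 : sp d u u = u 0 * u 0 + 1 := by
      have := B_eq (d := d) u u
      rw [hBuu] at this
      linarith
    have hcs := sp_cs (d := d) u col0
    rw [hr2, hspcol, ← hr1] at hcs
    have hu0sq : (u 0) ^ 2 ≤ col0 0 * col0 0 - 1 := by nlinarith
    have huj : ∀ k, |u k| ≤ E1 + 1 := by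
      intro k
      by_cases hk : k = 0
      · subst hk
        have h2 : (u 0) ^ 2 ≤ (E1 + 1) ^ 2 := by nlinarith
        have := abs_le_of_sq _ _ h2 (by linarith)
        exact abs_le.2 ⟨this.1, this.2⟩
      · have h1 : (u k) ^ 2 ≤ sp d u u := by
          rw [sq]
          unfold sp
          exact Finset.single_le_sum (fun l _ => mul_self_nonneg (u l))
            (Finset.mem_erase.2 ⟨hk, Finset.mem_univ k⟩)
        have h2 : (u k) ^ 2 ≤ (E1 + 1) ^ 2 := by nlinarith
        have := abs_le_of_sq _ _ h2 (by linarith)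
        exact abs_le.2 ⟨this.1, this.2⟩
    have : A i j = u i := by rw [hui]
    rw [this]
    exact huj i

end NCC

namespace NCC

open Topology

variable {d : ℕ}

lemma inv_displacement {g : Matrix.GeneralLinearGroup (Fin (d+1)) ℝ}
    (hg : IsIsomPlus d g) (p : Fin (d+1) → ℝ) :
    B d (((g⁻¹ : Matrix.GeneralLinearGroup (Fin (d+1)) ℝ) :
        Matrix (Fin (d+1)) (Fin (d+1)) ℝ).mulVec p) p
      = B d ((g : Matrix (Fin (d+1)) (Fin (d+1)) ℝ).mulVec p) p := by
  have h1 := B_iso hg (((g⁻¹ : Matrix.GeneralLinearGroup (Fin (d+1)) ℝ) :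
      Matrix (Fin (d+1)) (Fin (d+1)) ℝ).mulVec p) p
  rw [Matrix.mulVec_mulVec] at h1
  have h2 : (g : Matrix (Fin (d+1)) (Fin (d+1)) ℝ) *
      ((g⁻¹ : Matrix.GeneralLinearGroup (Fin (d+1)) ℝ) : Matrix (Fin (d+1)) (Fin (d+1)) ℝ)
      = 1 := Units.mul_inv g
  rw [h2, Matrix.one_mulVec] at h1
  rw [← h1, B_comm]

/-- Properness + discreteness: only finitely many elements of a discrete group of
isometries move a basepoint a bounded amount. -/
lemma finite_moved (Γ : Subgroup (Matrix.GeneralLinearGroup (Fin (d+1)) ℝ))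
    (hdisc : DiscreteTopology Γ)
    (hIso : ∀ g ∈ Γ, IsIsomPlus d g) {p : Fin (d+1) → ℝ} (hp : p ∈ hypSet d) (E : ℝ) :
    {g : Matrix.GeneralLinearGroup (Fin (d+1)) ℝ |
      g ∈ Γ ∧ B d ((g : Matrix (Fin (d+1)) (Fin (d+1)) ℝ).mulVec p) p ≤ E}.Finite := by
  classical
  set GLd := Matrix.GeneralLinearGroup (Fin (d+1)) ℝ
  set M := Matrix (Fin (d+1)) (Fin (d+1)) ℝ
  set S := {g : GLd | g ∈ Γ ∧ B d ((g : M).mulVec p) p ≤ E} with hS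
  set Emax := max E 1 with hEmax
  have hEmax1 : (1:ℝ) ≤ Emax := le_max_right _ _
  set D0 := B d p (e0 d) with hD0
  have hD01 : 1 ≤ D0 := B_ge_one hp e0_mem
  set E1 := 4 * D0 ^ 2 * Emax with hE1
  have hE1ge : (1:ℝ) ≤ E1 := by nlinarith
  set Eb := E1 + 1 with hEb
  -- every g ∈ S has displacement of e0 bounded by E1
  have hdisp : ∀ g : GLd, g ∈ Γ → B d ((g : M).mulVec p) p ≤ E →
      B d ((g : M).mulVec (e0 d)) (e0 d) ≤ E1 := by
    intro g hgΓ hgB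
    have hgI := hIso g hgΓ
    have hge0hyp : (g : M).mulVec (e0 d) ∈ hypSet d := hgI.2.2 _ e0_mem
    have hgphyp : (g : M).mulVec p ∈ hypSet d := hgI.2.2 _ hp
    have ht1 : B d ((g : M).mulVec (e0 d)) p
        ≤ 2 * (B d ((g : M).mulVec (e0 d)) ((g : M).mulVec p) * B d ((g : M).mulVec p) p) :=
      B_tri hge0hyp hgphyp hp
    rw [B_iso hgI] at ht1
    have he0p : B d (e0 d) p = D0 := by rw [B_comm]
    rw [he0p] at ht1
    have hgpB : B d ((g : M).mulVec p) p ≤ Emax := le_trans hgB (le_max_left _ _)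
    have ht1' : B d ((g : M).mulVec (e0 d)) p ≤ 2 * (D0 * Emax) := by
      have h := mul_le_mul_of_nonneg_left hgpB (by linarith : (0:ℝ) ≤ D0)
      nlinarith [ht1, h]
    have ht2 : B d ((g : M).mulVec (e0 d)) (e0 d)
        ≤ 2 * (B d ((g : M).mulVec (e0 d)) p * B d p (e0 d)) :=
      B_tri hge0hyp hp e0_mem
    rw [← hD0] at ht2
    have hBge0p_pos : 1 ≤ B d ((g : M).mulVec (e0 d)) p := B_ge_one hge0hyp hp
    nlinarith [ht2, ht1', mul_le_mul_of_nonneg_right ht1' (by linarith : (0:ℝ) ≤ D0)]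
  -- hence all entries of g and g⁻¹ are bounded by Eb, for g ∈ S
  have hentry : ∀ g : GLd, g ∈ S → (∀ i j, |(g : M) i j| ≤ Eb) ∧ (∀ i j, |((g⁻¹ : GLd) : M) i j| ≤ Eb) := by
    intro g hgS
    obtain ⟨hgΓ, hgB⟩ := hgS
    constructor
    · exact entries_bound (hIso g hgΓ) hE1ge (hdisp g hgΓ hgB)
    · have hginv : g⁻¹ ∈ Γ := inv_mem hgΓ
      have hgB' : B d (((g⁻¹ : GLd) : M).mulVec p) p ≤ E := by
        rw [inv_displacement (hIso g hgΓ) p]; exact hgB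
      exact entries_bound (hIso g⁻¹ hginv) hE1ge (hdisp g⁻¹ hginv hgB')
  -- the compact entry box in matrix space
  set Zb : Set M := {A : M | ∀ i j, A i j ∈ Set.Icc (-Eb) Eb} with hZb
  have hZbeq : Zb = Set.univ.pi (fun i : Fin (d+1) =>
      (Set.univ.pi (fun j : Fin (d+1) => Set.Icc (-Eb) Eb))) := by
    ext A
    constructor
    · intro h
      apply Set.mem_univ_pi.2
      intro i
      apply Set.mem_univ_pi.2
      intro j
      exact h i j
    · intro h i j
      exact Set.mem_univ_pi.1 (Set.mem_univ_pi.1 h i) j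
  have hZbcompact : IsCompact Zb := by
    rw [hZbeq]
    exact isCompact_univ_pi (fun i => isCompact_univ_pi (fun j => isCompact_Icc))
  have hZbclosed : IsClosed Zb := by
    rw [hZbeq]
    exact isClosed_set_pi (fun i _ => isClosed_set_pi (fun j _ => isClosed_Icc))
  -- the compact subset of GL
  set W : Set GLd := {g : GLd | (g : M) ∈ Zb ∧ ((g⁻¹ : GLd) : M) ∈ Zb} with hW
  have hWcompact : IsCompact W := by
    rw [(Units.isEmbedding_embedProduct (M := M)).isCompact_iff]
    have himage : (Units.embedProduct M) '' W
        = (Zb ×ˢ (MulOpposite.op '' Zb)) ∩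
          {q : M × Mᵐᵒᵖ | q.1 * q.2.unop = 1 ∧ q.2.unop * q.1 = 1} := by
      ext q
      constructor
      · rintro ⟨g, hgW, rfl⟩
        refine ⟨⟨hgW.1, ⟨((g⁻¹ : GLd) : M), hgW.2, rfl⟩⟩, ?_, ?_⟩
        · simp [Units.embedProduct]
        · simp [Units.embedProduct]
      · rintro ⟨⟨hq1, c, hcZb, hcq⟩, hrel1, hrel2⟩
        have hq2 : q.2.unop = c := by rw [← hcq]; simp
        refine ⟨⟨q.1, c, by rw [← hq2]; exact hrel1, by rw [← hq2]; exact hrel2⟩,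
          ⟨hq1, ?_⟩, ?_⟩
        · show c ∈ Zb
          exact hcZb
        · show (q.1, MulOpposite.op c) = q
          exact Prod.ext rfl hcq
    rw [himage]
    apply IsCompact.inter_right
    · exact hZbcompact.prod (hZbcompact.image MulOpposite.continuous_op)
    · apply IsClosed.inter
      · exact isClosed_eq (continuous_fst.mul (MulOpposite.continuous_unop.comp continuous_snd))
          continuous_const
      · exact isClosed_eq ((MulOpposite.continuous_unop.comp continuous_snd).mul continuous_fst)
          continuous_const
  -- Γ is closed, being discrete
  haveI hT2 : T2Space GLd := (Units.isEmbedding_embedProduct (M := M)).t2Space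
  haveI := hdisc
  have hΓclosed : IsClosed (Γ : Set GLd) := Subgroup.isClosed_of_discrete
  have hFcompact : IsCompact ((Γ : Set GLd) ∩ W) :=
    hWcompact.inter_left hΓclosed
  haveI hdiscset : DiscreteTopology ((Γ : Set GLd) : Type _) := hdisc
  haveI hFdisc : DiscreteTopology (((Γ : Set GLd) ∩ W : Set GLd) : Type _) :=
    DiscreteTopology.of_subset hdiscset Set.inter_subset_left
  have hFfinite : ((Γ : Set GLd) ∩ W).Finite := hFcompact.finite (isDiscrete_iff_discreteTopology.2 hFdisc)
  apply hFfinite.subset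
  intro g hgS
  refine ⟨hgS.1, ?_, ?_⟩
  · intro i j
    have := (hentry g hgS).1 i j
    exact ⟨by linarith [abs_le.1 this |>.1], by linarith [abs_le.1 this |>.2]⟩
  · intro i j
    have := (hentry g hgS).2 i j
    exact ⟨by linarith [abs_le.1 this |>.1], by linarith [abs_le.1 this |>.2]⟩

end NCC

namespace NCC

open Topology

variable {d : ℕ}

abbrev GLn (d : ℕ) := Matrix.GeneralLinearGroup (Fin (d+1)) ℝ
abbrev Mn (d : ℕ) := Matrix (Fin (d+1)) (Fin (d+1)) ℝ

lemma continuous_mulVec (A : Matrix (Fin (d+1)) (Fin (d+1)) ℝ) :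
    Continuous (fun v : Fin (d+1) → ℝ => A.mulVec v) := by
  have h := (Matrix.mulVecLin A).continuous_of_finiteDimensional
  have : ⇑(Matrix.mulVecLin A) = fun v : Fin (d+1) → ℝ => A.mulVec v := by
    funext v; exact Matrix.mulVecLin_apply A v
  rwa [this] at h

/-- The geometric heart: for every `γ ∈ Γ₁`, the convex core `C` of `Γ₂` meets its
`γ`-translate.  Otherwise the (attained) minimal distance pair between them would be
unique, hence `Γ₂`-fixed, forcing `Γ₂` to be finite. -/
lemma core_intersect (Γ₁ Γ₂ : Subgroup (Matrix.GeneralLinearGroup (Fin (d+1)) ℝ))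
    (hIso : ∀ g ∈ Γ₁, IsIsomPlus d g)
    (hdisc₁ : DiscreteTopology Γ₁) (hle : Γ₂ ≤ Γ₁)
    (hnormal : ∀ γ ∈ Γ₁, ∀ δ ∈ Γ₂, γ * δ * γ⁻¹ ∈ Γ₂)
    (hΓ₂inf : Infinite ↥Γ₂)
    {C K : Set (Fin (d+1) → ℝ)}
    (hCclosed : IsClosed C) (hCsub : C ⊆ hypSet d) (hCconv : ConeConvex d C)
    (hCinv : ∀ g ∈ Γ₂,
      (fun x => (g : Matrix (Fin (d + 1)) (Fin (d + 1)) ℝ).mulVec x) '' C = C)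
    (hKcomp : IsCompact K) (hKsub : K ⊆ C)
    (hKcov : C ⊆ ⋃ g ∈ Γ₂,
      (fun x => (g : Matrix (Fin (d + 1)) (Fin (d + 1)) ℝ).mulVec x) '' K)
    {p : Fin (d+1) → ℝ} (hpK : p ∈ K)
    {D : ℝ} (hD1 : 1 ≤ D) (hDb : ∀ k ∈ K, B d p k ≤ D)
    {γ : Matrix.GeneralLinearGroup (Fin (d+1)) ℝ} (hγ : γ ∈ Γ₁) :
    ∃ x, x ∈ C ∧ x ∈ (fun v => (γ : Matrix (Fin (d+1)) (Fin (d+1)) ℝ).mulVec v) '' C := by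
  classical
  set Bset := (fun v => (γ : Mn d).mulVec v) '' C with hBset
  have hγI := hIso γ hγ
  have hp : p ∈ hypSet d := hCsub (hKsub hpK)
  have hcancel : ∀ v : Fin (d+1) → ℝ,
      ((γ⁻¹ : GLn d) : Mn d).mulVec ((γ : Mn d).mulVec v) = v := by
    intro v
    rw [Matrix.mulVec_mulVec]
    have : ((γ⁻¹ : GLn d) : Mn d) * (γ : Mn d) = 1 := Units.inv_mul γ
    rw [this, Matrix.one_mulVec]
  have hcancel' : ∀ v : Fin (d+1) → ℝ,
      (γ : Mn d).mulVec (((γ⁻¹ : GLn d) : Mn d).mulVec v) = v := by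
    intro v
    rw [Matrix.mulVec_mulVec]
    have : (γ : Mn d) * ((γ⁻¹ : GLn d) : Mn d) = 1 := Units.mul_inv γ
    rw [this, Matrix.one_mulVec]
  have hBmem : ∀ v, v ∈ Bset ↔ ((γ⁻¹ : GLn d) : Mn d).mulVec v ∈ C := by
    intro v
    constructor
    · rintro ⟨w, hw, rfl⟩
      rw [hcancel w]; exact hw
    · intro hv
      exact ⟨_, hv, hcancel' v⟩
  have hBsub : Bset ⊆ hypSet d := by
    rintro v ⟨w, hw, rfl⟩
    exact hγI.2.2 w (hCsub hw)
  have hBclosed : IsClosed Bset := by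
    have : Bset = (fun v => ((γ⁻¹ : GLn d) : Mn d).mulVec v) ⁻¹' C := by
      ext v; exact hBmem v
    rw [this]
    exact hCclosed.preimage (continuous_mulVec _)
  have hBconv : Convex ℝ {v | ∃ t : ℝ, 0 < t ∧ ∃ x ∈ Bset, v = t • x} := by
    have hseteq : {v | ∃ t : ℝ, 0 < t ∧ ∃ x ∈ Bset, v = t • x}
        = (fun v => ((γ⁻¹ : GLn d) : Mn d).mulVec v) ⁻¹'
          {v | ∃ t : ℝ, 0 < t ∧ ∃ x ∈ C, v = t • x} := by
      ext v
      constructor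
      · rintro ⟨t, ht, x, hx, rfl⟩
        obtain ⟨w, hw, rfl⟩ := hx
        refine ⟨t, ht, w, hw, ?_⟩
        show ((γ⁻¹ : GLn d) : Mn d).mulVec (t • (γ : Mn d).mulVec w) = t • w
        rw [Matrix.mulVec_smul, hcancel w]
      · rintro ⟨t, ht, w, hw, hvw⟩
        have hvw' : ((γ⁻¹ : GLn d) : Mn d).mulVec v = t • w := hvw
        refine ⟨t, ht, (γ : Mn d).mulVec w, ⟨w, hw, rfl⟩, ?_⟩
        calc v = (γ : Mn d).mulVec (((γ⁻¹ : GLn d) : Mn d).mulVec v) := (hcancel' v).symm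
          _ = (γ : Mn d).mulVec (t • w) := by rw [hvw']
          _ = t • (γ : Mn d).mulVec w := Matrix.mulVec_smul _ t w
    rw [hseteq]
    exact hCconv.linear_preimage
      { toFun := fun v => ((γ⁻¹ : GLn d) : Mn d).mulVec v,
        map_add' := fun a b => Matrix.mulVec_add _ a b,
        map_smul' := fun c a => Matrix.mulVec_smul _ c a }
  have hBinv : ∀ δ, δ ∈ Γ₂ → (fun v => ((δ : GLn d) : Mn d).mulVec v) '' Bset = Bset := by
    intro δ hδ
    have hδ' : γ⁻¹ * δ * γ ∈ Γ₂ := by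
      have := hnormal γ⁻¹ (inv_mem hγ) δ hδ
      rwa [inv_inv] at this
    rw [hBset, Set.image_image]
    have hcomp : (fun v => ((δ : GLn d) : Mn d).mulVec ((γ : Mn d).mulVec v))
        = fun v => (γ : Mn d).mulVec ((((γ⁻¹ * δ * γ : GLn d)) : Mn d).mulVec v) := by
      funext v
      rw [Matrix.mulVec_mulVec, Matrix.mulVec_mulVec]
      congr 1
      rw [Units.val_mul, Units.val_mul]
      simp only [← mul_assoc]
      rw [Units.mul_inv, one_mul]
    rw [hcomp, ← Set.image_image]
    rw [hCinv _ hδ']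
  -- attainment of the minimum
  have hb₀ : (γ : Mn d).mulVec p ∈ Bset := ⟨p, hKsub hpK, rfl⟩
  set b₀ := (γ : Mn d).mulVec p with hb₀def
  set c := B d p b₀ with hcdef
  have hc1 : 1 ≤ c := B_ge_one hp (hBsub hb₀)
  set R := 2 * (D * c) with hRdef
  set KB := {x | x ∈ hypSet d ∧ B d p x ≤ R} ∩ Bset with hKB
  have hKBcompact : IsCompact KB := (isCompact_hypBall hp R).inter_right hBclosed
  have hb₀KB : b₀ ∈ KB := by
    refine ⟨⟨hBsub hb₀, ?_⟩, hb₀⟩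
    rw [← hcdef]
    nlinarith
  have hne : (K ×ˢ KB).Nonempty := ⟨(p, b₀), hpK, hb₀KB⟩
  obtain ⟨q, hqmem, hqmin⟩ := (hKcomp.prod hKBcompact).exists_isMinOn hne
    (continuous_B2.continuousOn)
  set xh := q.1 with hxh
  set yh := q.2 with hyh
  have hxhK : xh ∈ K := hqmem.1
  have hyhKB : yh ∈ KB := hqmem.2
  set m := B d xh yh with hmdef
  have hxhC : xh ∈ C := hKsub hxhK
  have hyhB : yh ∈ Bset := hyhKB.2
  have hminprod : ∀ k ∈ K, ∀ b ∈ KB, m ≤ B d k b := by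
    intro k hk b hb
    exact isMinOn_iff.1 hqmin (k, b) ⟨hk, hb⟩
  have hmc : m ≤ c := by
    have := hminprod p hpK b₀ hb₀KB
    rw [← hcdef] at this
    exact this
  -- globalize the minimality
  have hglobal : ∀ a ∈ C, ∀ b ∈ Bset, m ≤ B d a b := by
    intro a ha b hb
    obtain ⟨δ, hδ, w, hwK, hww⟩ : ∃ δ ∈ Γ₂, ∃ w ∈ K, ((δ : GLn d) : Mn d).mulVec w = a := by
      have := hKcov ha
      simp only [Set.mem_iUnion] at this
      obtain ⟨δ, hδ, w, hw, hww⟩ := this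
      exact ⟨δ, hδ, w, hw, hww⟩
    have hδI := hIso δ (hle hδ)
    have hδinvI := hIso δ⁻¹ (inv_mem (hle hδ))
    set b' := ((δ⁻¹ : GLn d) : Mn d).mulVec b with hb'def
    have hcancelδ : ((δ⁻¹ : GLn d) : Mn d).mulVec a = w := by
      rw [← hww, Matrix.mulVec_mulVec]
      have : ((δ⁻¹ : GLn d) : Mn d) * (δ : Mn d) = 1 := Units.inv_mul δ
      rw [this, Matrix.one_mulVec]
    have hab : B d a b = B d w b' := by
      have := B_iso hδinvI a b
      rw [hcancelδ, ← hb'def] at this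
      exact this.symm
    have hb'B : b' ∈ Bset := by
      rw [← hBinv δ⁻¹ (inv_mem hδ)]
      exact ⟨b, hb, rfl⟩
    rcases le_or_gt c (B d w b') with hcb | hcb
    · rw [hab]; linarith
    · have hwhyps : w ∈ hypSet d := hCsub (hKsub hwK)
      have hb'hyp : b' ∈ hypSet d := hBsub hb'B
      have htri : B d p b' ≤ 2 * (B d p w * B d w b') := B_tri hp hwhyps hb'hyp
      have hpw : B d p w ≤ D := hDb w hwK
      have h1w : 1 ≤ B d p w := B_ge_one hp hwhyps
      have h1b : 1 ≤ B d w b' := B_ge_one hwhyps hb'hyp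
      have : B d p b' ≤ R := by
        rw [hRdef]
        nlinarith
      have hb'KB : b' ∈ KB := ⟨⟨hb'hyp, this⟩, hb'B⟩
      rw [hab]
      exact hminprod w hwK b' hb'KB
  have hm1 : 1 ≤ m := B_ge_one (hCsub hxhC) (hBsub hyhB)
  rcases eq_or_lt_of_le hm1 with hm | hm
  · -- the two sets intersect
    have : xh = yh := B_eq_one_iff (hCsub hxhC) (hBsub hyhB) hm.symm
    exact ⟨xh, hxhC, this ▸ hyhB⟩
  · -- impossible: Γ₂ would fix a point
    exfalso
    have hfix : ∀ δ, δ ∈ Γ₂ → ((δ : GLn d) : Mn d).mulVec xh = xh := by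
      intro δ hδ
      have hδI := hIso δ (hle hδ)
      have hδx : ((δ : GLn d) : Mn d).mulVec xh ∈ C := by
        rw [← hCinv δ hδ]; exact ⟨xh, hxhC, rfl⟩
      have hδy : ((δ : GLn d) : Mn d).mulVec yh ∈ Bset := by
        rw [← hBinv δ hδ]; exact ⟨yh, hyhB, rfl⟩
      have hval : B d (((δ : GLn d) : Mn d).mulVec xh) (((δ : GLn d) : Mn d).mulVec yh) = m :=
        B_iso hδI xh yh
      have := pair_unique hCsub hBsub hCconv hBconv hm hglobal hxhC hδx hyhB hδy
        hmdef.symm hval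
      exact this.1.symm
    have hxhhyp : xh ∈ hypSet d := hCsub hxhC
    have hsubset : (Γ₂ : Set (GLn d)) ⊆
        {g : GLn d | g ∈ Γ₁ ∧ B d ((g : Mn d).mulVec xh) xh ≤ 1} := by
      intro δ hδ
      refine ⟨hle hδ, ?_⟩
      rw [hfix δ hδ, hyp_B_self hxhhyp]
      
    have hfin := (finite_moved Γ₁ hdisc₁ hIso hxhhyp 1).subset hsubset
    haveI := hfin.to_subtype
    exact not_finite ↥Γ₂
end NCC

open NCC

/-- If `Γ₁, Γ₂` are non-elementary convex cocompact discrete subgroups of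
`Isom⁺(ℍ^d)` and `Γ₂` is a normal subgroup of `Γ₁`, then `Γ₂` has finite index in
`Γ₁`. -/
theorem normal_convex_cocompact_finite_index (d : ℕ) (hd : 2 ≤ d)
    (Γ₁ Γ₂ : Subgroup (Matrix.GeneralLinearGroup (Fin (d + 1)) ℝ))
    (hIso : ∀ g ∈ Γ₁, IsIsomPlus d g)
    (hdisc₁ : DiscreteTopology Γ₁) (hdisc₂ : DiscreteTopology Γ₂)
    (hne₁ : NonElementary Γ₁) (hne₂ : NonElementary Γ₂)
    (hcc₁ : ConvexCocompact d Γ₁) (hcc₂ : ConvexCocompact d Γ₂)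
    (hle : Γ₂ ≤ Γ₁)
    (hnormal : ∀ γ ∈ Γ₁, ∀ δ ∈ Γ₂, γ * δ * γ⁻¹ ∈ Γ₂) :
    Γ₂.relIndex Γ₁ ≠ 0 := by
  classical
  obtain ⟨C, hCne, hCclosed, hCsub, hCconv, hCinv, K, hKcomp, hKsub, hKcov⟩ := hcc₂
  -- Γ₂ is infinite (it is non-elementary)
  have hΓ₂inf : Infinite ↥Γ₂ := by
    have h := hne₂ 1
    rw [Subgroup.zpowers_one_eq_bot, Subgroup.relIndex_bot_left] at h
    rcases Nat.card_eq_zero.1 h with h' | h'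
    · exact (h'.false ⟨1, one_mem _⟩).elim
    · exact h'
  have hKne : K.Nonempty := by
    obtain ⟨c0, hc0⟩ := hCne
    have := hKcov hc0
    simp only [Set.mem_iUnion] at this
    obtain ⟨g, hg, w, hw, _⟩ := this
    exact ⟨w, hw⟩
  obtain ⟨p, hpK⟩ := hKne
  have hp : p ∈ hypSet d := hCsub (hKsub hpK)
  obtain ⟨k₀, hk₀, hk₀max⟩ := hKcomp.exists_isMaxOn ⟨p, hpK⟩
    ((continuous_B_right (d := d) p).continuousOn)
  set D := max (B d p k₀) 1 with hD
  have hD1 : 1 ≤ D := le_max_right _ _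
  have hDb : ∀ k ∈ K, B d p k ≤ D := fun k hk =>
    le_trans (isMaxOn_iff.1 hk₀max k hk) (le_max_left _ _)
  -- the finite set of candidate coset representatives
  set T : Set (Matrix.GeneralLinearGroup (Fin (d + 1)) ℝ) :=
    {g | g ∈ Γ₁ ∧ B d ((g : Matrix (Fin (d+1)) (Fin (d+1)) ℝ).mulVec p) p ≤ 2 * (D * D)}
    with hT
  have hTfin : T.Finite := finite_moved Γ₁ hdisc₁ hIso hp (2 * (D * D))
  haveI : Finite ↥T := hTfin.to_subtype
  haveI hQfin : Finite (Γ₁ ⧸ Γ₂.subgroupOf Γ₁) := by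
    apply Finite.of_surjective
      (fun h : ↥T => (QuotientGroup.mk ⟨h.1, h.2.1⟩ : Γ₁ ⧸ Γ₂.subgroupOf Γ₁))
    intro q
    refine QuotientGroup.induction_on q ?_
    intro γb
    set γ := (γb : Matrix.GeneralLinearGroup (Fin (d + 1)) ℝ) with hγdef
    have hγ : γ ∈ Γ₁ := γb.2
    obtain ⟨x, hxC, hxim⟩ := core_intersect Γ₁ Γ₂ hIso hdisc₁ hle hnormal hΓ₂inf
      hCclosed hCsub hCconv hCinv hKcomp hKsub hKcov hpK hD1 hDb hγ
    -- x = δ k with δ ∈ Γ₂, k ∈ K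
    obtain ⟨δ, hδ, k, hk, hδk⟩ : ∃ δ ∈ Γ₂, ∃ k ∈ K,
        ((δ : Matrix.GeneralLinearGroup (Fin (d + 1)) ℝ) :
          Matrix (Fin (d+1)) (Fin (d+1)) ℝ).mulVec k = x := by
      have := hKcov hxC
      simp only [Set.mem_iUnion] at this
      obtain ⟨g, hg, w, hw, hww⟩ := this
      exact ⟨g, hg, w, hw, hww⟩
    -- x = γ δ' k' with δ' ∈ Γ₂, k' ∈ K
    obtain ⟨c₁, hc₁C, hc₁⟩ := hxim
    have hc₁' : ((γ : Matrix.GeneralLinearGroup (Fin (d + 1)) ℝ) :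
        Matrix (Fin (d+1)) (Fin (d+1)) ℝ).mulVec c₁ = x := hc₁
    obtain ⟨δ', hδ', k', hk', hδ'k'⟩ : ∃ δ' ∈ Γ₂, ∃ k' ∈ K,
        ((δ' : Matrix.GeneralLinearGroup (Fin (d + 1)) ℝ) :
          Matrix (Fin (d+1)) (Fin (d+1)) ℝ).mulVec k' = c₁ := by
      have := hKcov hc₁C
      simp only [Set.mem_iUnion] at this
      obtain ⟨g, hg, w, hw, hww⟩ := this
      exact ⟨g, hg, w, hw, hww⟩
    have hxγδ' : ((γ * δ' : Matrix.GeneralLinearGroup (Fin (d + 1)) ℝ) :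
        Matrix (Fin (d+1)) (Fin (d+1)) ℝ).mulVec k' = x := by
      rw [Units.val_mul, ← Matrix.mulVec_mulVec, hδ'k', hc₁']
    set h := δ⁻¹ * γ * δ' with hhdef
    have hhΓ₁ : h ∈ Γ₁ := mul_mem (mul_mem (inv_mem (hle hδ)) hγ) (hle hδ')
    -- displacement bound for h
    have hδI := hIso δ (hle hδ)
    have hγδ'I := hIso (γ * δ') (mul_mem hγ (hle hδ'))
    have hδh : δ * h = γ * δ' := by rw [hhdef]; group
    have hdisp : B d (((h : Matrix.GeneralLinearGroup (Fin (d + 1)) ℝ) :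
        Matrix (Fin (d+1)) (Fin (d+1)) ℝ).mulVec p) p ≤ 2 * (D * D) := by
      have e1 := B_iso hδI (((h : Matrix.GeneralLinearGroup (Fin (d + 1)) ℝ) :
        Matrix (Fin (d+1)) (Fin (d+1)) ℝ).mulVec p) p
      rw [Matrix.mulVec_mulVec, ← Units.val_mul, hδh] at e1
      rw [← e1]
      -- now bound B (γδ' p) (δ p) via the common point x
      have hahyp : ((γ * δ' : Matrix.GeneralLinearGroup (Fin (d + 1)) ℝ) :
          Matrix (Fin (d+1)) (Fin (d+1)) ℝ).mulVec p ∈ hypSet d := hγδ'I.2.2 p hp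
      have hbhyp : ((δ : Matrix.GeneralLinearGroup (Fin (d + 1)) ℝ) :
          Matrix (Fin (d+1)) (Fin (d+1)) ℝ).mulVec p ∈ hypSet d := hδI.2.2 p hp
      have hxhyp : x ∈ hypSet d := hCsub hxC
      have htri := B_tri hahyp hxhyp hbhyp
      have hax : B d (((γ * δ' : Matrix.GeneralLinearGroup (Fin (d + 1)) ℝ) :
          Matrix (Fin (d+1)) (Fin (d+1)) ℝ).mulVec p) x ≤ D := by
        rw [← hxγδ', B_iso hγδ'I]
        exact hDb k' hk'
      have hxb : B d x (((δ : Matrix.GeneralLinearGroup (Fin (d + 1)) ℝ) :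
          Matrix (Fin (d+1)) (Fin (d+1)) ℝ).mulVec p) ≤ D := by
        rw [← hδk, B_iso hδI, B_comm]
        exact hDb k hk
      have h1 : 1 ≤ B d (((γ * δ' : Matrix.GeneralLinearGroup (Fin (d + 1)) ℝ) :
          Matrix (Fin (d+1)) (Fin (d+1)) ℝ).mulVec p) x := B_ge_one hahyp hxhyp
      have h2 : 1 ≤ B d x (((δ : Matrix.GeneralLinearGroup (Fin (d + 1)) ℝ) :
          Matrix (Fin (d+1)) (Fin (d+1)) ℝ).mulVec p) := B_ge_one hxhyp hbhyp
      nlinarith [htri, hax, hxb, h1, h2]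
    refine ⟨⟨h, hhΓ₁, hdisp⟩, ?_⟩
    -- same coset
    have : (⟨h, hhΓ₁⟩ : Γ₁)⁻¹ * γb ∈ Γ₂.subgroupOf Γ₁ := by
      rw [Subgroup.mem_subgroupOf]
      show h⁻¹ * γ ∈ Γ₂
      have hrw : h⁻¹ * γ = δ'⁻¹ * (γ⁻¹ * δ * γ) := by rw [hhdef]; group
      rw [hrw]
      have hmem : γ⁻¹ * δ * γ ∈ Γ₂ := by
        have := hnormal γ⁻¹ (inv_mem hγ) δ hδ
        rwa [inv_inv] at this
      exact mul_mem (inv_mem hδ') hmem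
    show (QuotientGroup.mk (⟨h, hhΓ₁⟩ : Γ₁) : Γ₁ ⧸ Γ₂.subgroupOf Γ₁) = QuotientGroup.mk γb
    exact QuotientGroup.eq.2 this
  exact Subgroup.index_ne_zero_of_finite
end

section
/- Let V be a finite dimensional real vector space, θ ∈ ℝ[V] a polynomial, and A = {v ∈ V : θ(v) = 0}. Then for any compact subset D ⊂ A and any β > 0 there exists a compact neighborhood D' ⊂ A of D in A with the following property: for any neighborhood Φ of D' in V, there exists a neighborhood Ψ ⊂ Φ of D such that for every q ∈ V − Φ and every one-parameter unipotent subgroup {u_t} ⊂ GL(V), the pair (I(q), J(q)) is β-regular, where I(q) = {t ∈ ℝ : q·u_t ∈ Φ} and J(q) = {t ∈ ℝ : q·u_t ∈ Ψ}. Moreover, the degree of the pair (I(q), J(q)) is at most (deg θ + 2)·dim V. -/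
open MeasureTheory

/-- The length of a subset of `ℝ`. -/
noncomputable def len (S : Set ℝ) : ℝ := (volume S).toReal

/-- The pair `(I, J)` (with `J ⊆ I`) is `β`-regular. -/
def PairRegular (β : ℝ) (I J : Set ℝ) : Prop :=
  ∀ x ∈ J, ∀ t ∈ connectedComponentIn J x,
    t + β * len (connectedComponentIn J x) ∈ connectedComponentIn I x ∧
    t - β * len (connectedComponentIn J x) ∈ connectedComponentIn I x

/-- The pair `(I, J)` has degree at most `δ`. -/
def PairDegreeLE (δ : ℕ) (I J : Set ℝ) : Prop :=
  ∀ x ∈ I,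
    ({S : Set ℝ | ∃ y ∈ J, S = connectedComponentIn J y ∧
        S ⊆ connectedComponentIn I x}).Finite ∧
    ({S : Set ℝ | ∃ y ∈ J, S = connectedComponentIn J y ∧
        S ⊆ connectedComponentIn I x}).ncard ≤ δ

/-- The one-parameter unipotent subgroup `u_t = exp(tX)` for a nilpotent matrix `X`
(with `Xⁿ = 0` the exponential series terminates). -/
noncomputable def unipOneParam (n : ℕ) (X : Matrix (Fin n) (Fin n) ℝ) (t : ℝ) :
    Matrix (Fin n) (Fin n) ℝ :=
  ∑ k ∈ Finset.range n, (t ^ k / (Nat.factorial k : ℝ)) • X ^ k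

section Aux
open Polynomial Set
open scoped Classical


lemma poly_growth (d : ℕ) (hd : 1 ≤ d) (β : ℝ) (hβ : 0 < β) (p : Polynomial ℝ)
    (hp : p.natDegree ≤ d) (a b M : ℝ) (hab : a < b)
    (hM : ∀ t ∈ Set.Icc a b, |p.eval t| ≤ M) (s : ℝ)
    (hs : s ∈ Set.Icc (a - β*(b-a)) (b + β*(b-a))) :
    |p.eval s| ≤ ((d:ℝ)+1) * ((1+β)*d)^d * M := by
  have hL : (0:ℝ) < b - a := by linarith
  have hdpos : (0:ℝ) < d := by exact_mod_cast hd
  set L : ℝ := b - a with hLdef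
  set v : ℕ → ℝ := fun i => a + i * (L / d) with hv
  have hvinj : Set.InjOn v (Finset.range (d+1)) := by
    intro i _ j _ hij
    have h : (i:ℝ) * (L/d) = j * (L/d) := by
      simpa [hv] using hij
    have hLd : (0:ℝ) < L / d := div_pos hL hdpos
    have : (i:ℝ) = j := mul_right_cancel₀ hLd.ne' h
    exact_mod_cast this
  have hdeg : p.degree < (Finset.range (d+1)).card := by
    have h2 : (p.natDegree : WithBot ℕ) < (((Finset.range (d+1)).card : ℕ) : WithBot ℕ) := by
      rw [Finset.card_range]
      exact_mod_cast Nat.lt_succ_of_le hp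
    exact lt_of_le_of_lt Polynomial.degree_le_natDegree h2
  have hinterp := Lagrange.eq_interpolate (f := p) hvinj hdeg
  -- node location
  have hvmem : ∀ j ∈ Finset.range (d+1), v j ∈ Set.Icc a b := by
    intro j hj
    have hj' : (j:ℝ) ≤ d := by
      exact_mod_cast Nat.lt_succ_iff.mp (Finset.mem_range.mp hj)
    constructor
    · have : 0 ≤ (j:ℝ) * (L/d) := by positivity
      simp [hv]; linarith
    · have : (j:ℝ) * (L/d) ≤ d * (L/d) := by
        apply mul_le_mul_of_nonneg_right hj' (by positivity)
      have h2 : (d:ℝ) * (L/d) = L := by field_simp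
      simp only [hv]; rw [hLdef] at *; nlinarith
  have hfactor : ∀ i ∈ Finset.range (d+1), ∀ j ∈ Finset.range (d+1), i ≠ j →
      |Polynomial.eval s (Lagrange.basisDivisor (v i) (v j))| ≤ (1+β)*d := by
    intro i hi j hj hij
    have hvij : v i - v j = ((i:ℝ) - j) * (L/d) := by simp [hv]; ring
    have habs : |v i - v j| ≥ L/d := by
      rw [hvij, abs_mul]
      have h1 : (1:ℝ) ≤ |(i:ℝ) - j| := by
        have : (i:ℝ) ≠ j := fun h => hij (by exact_mod_cast h)
        have h2 : (i:ℝ) - j ≠ 0 := sub_ne_zero_of_ne this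
        have : ∃ k : ℤ, (i:ℝ) - j = k := ⟨(i:ℤ) - j, by push_cast; ring⟩
        obtain ⟨k, hk⟩ := this
        rw [hk] at h2 ⊢
        have : k ≠ 0 := by exact_mod_cast h2
        calc (1:ℝ) ≤ |(k:ℤ)| := by exact_mod_cast Int.one_le_abs this
        _ = |(k:ℝ)| := by simp [Int.cast_abs]
      have hLd : (0:ℝ) < L/d := div_pos hL hdpos
      rw [abs_of_pos hLd]
      nlinarith [h1, hLd]
    have hsj : |s - v j| ≤ (1+β)*L := by
      obtain ⟨hj1, hj2⟩ := hvmem j hj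
      obtain ⟨hs1, hs2⟩ := hs
      rw [abs_le]
      constructor <;> [nlinarith; nlinarith]
    rw [Lagrange.basisDivisor]
    rw [Polynomial.eval_mul, Polynomial.eval_C, Polynomial.eval_sub, Polynomial.eval_X,
      Polynomial.eval_C, abs_mul, abs_inv]
    have hne : v i ≠ v j := fun h => hij (hvinj hi hj h)
    have habs0 : (0:ℝ) < |v i - v j| := abs_pos.mpr (sub_ne_zero_of_ne hne)
    rw [inv_mul_le_iff₀ habs0]
    calc |s - v j| ≤ (1+β)*L := hsj
    _ = ((1+β)*d) * (L/d) := by field_simp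
    _ ≤ ((1+β)*d) * |v i - v j| := by
        apply mul_le_mul_of_nonneg_left habs (by positivity)
    _ = |v i - v j| * ((1+β)*d) := mul_comm _ _
  have hbasis : ∀ i ∈ Finset.range (d+1),
      |Polynomial.eval s (Lagrange.basis (Finset.range (d+1)) v i)| ≤ ((1+β)*d)^d := by
    intro i hi
    rw [Lagrange.basis, Polynomial.eval_prod, Finset.abs_prod]
    have hcard : ((Finset.range (d+1)).erase i).card = d := by
      rw [Finset.card_erase_of_mem hi, Finset.card_range]; omega
    calc ∏ j ∈ (Finset.range (d+1)).erase i, |Polynomial.eval s (Lagrange.basisDivisor (v i) (v j))|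
        ≤ ∏ j ∈ (Finset.range (d+1)).erase i, ((1+β)*d) := by
          apply Finset.prod_le_prod (fun j _ => abs_nonneg _)
          intro j hj
          obtain ⟨hij, hj'⟩ := Finset.mem_erase.mp hj
          exact hfactor i hi j hj' (Ne.symm hij)
    _ = ((1+β)*d)^d := by rw [Finset.prod_const, hcard]
  have hM0 : 0 ≤ M := le_trans (abs_nonneg _) (hM a ⟨le_refl a, le_of_lt hab⟩)
  calc |p.eval s| = |Polynomial.eval s (Lagrange.interpolate (Finset.range (d+1)) v
        (fun i => p.eval (v i)))| := by rw [← hinterp]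
  _ ≤ ∑ i ∈ Finset.range (d+1), |p.eval (v i)| *
        |Polynomial.eval s (Lagrange.basis (Finset.range (d+1)) v i)| := by
      rw [Lagrange.interpolate_apply, Polynomial.eval_finset_sum]
      refine le_trans (Finset.abs_sum_le_sum_abs _ _) ?_
      apply Finset.sum_le_sum
      intro i hi
      rw [Polynomial.eval_mul, Polynomial.eval_C, abs_mul]
  _ ≤ ∑ i ∈ Finset.range (d+1), M * ((1+β)*d)^d := by
      apply Finset.sum_le_sum
      intro i hi
      exact mul_le_mul (hM _ (hvmem i hi)) (hbasis i hi) (abs_nonneg _) hM0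
  _ = ((d:ℝ)+1) * ((1+β)*d)^d * M := by
      rw [Finset.sum_const, Finset.card_range]
      push_cast; ring
lemma poly_between (p : Polynomial ℝ) (x y t : ℝ) (ht : t ∈ Set.Icc x y)
    (hroots : ∀ z ∈ Set.Icc x y, z ∉ p.derivative.roots.toFinset) :
    p.eval t ≤ max (p.eval x) (p.eval y) ∧ min (p.eval x) (p.eval y) ≤ p.eval t := by
  obtain ⟨htx, hty⟩ := ht
  have hxy : x ≤ y := le_trans htx hty
  by_cases hd : p.derivative = 0
  · have h0 : p.natDegree = 0 := Polynomial.natDegree_eq_zero_of_derivative_eq_zero hd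
    obtain ⟨c, rfl⟩ := Polynomial.natDegree_eq_zero.mp h0
    simp
  · have hne : ∀ z ∈ Set.Icc x y, p.derivative.eval z ≠ 0 := by
      intro z hz h0
      exact hroots z hz (Multiset.mem_toFinset.mpr (Polynomial.mem_roots'.mpr ⟨hd, h0⟩))
    have hcont : ContinuousOn (fun s => p.eval s) (Set.Icc x y) :=
      (Polynomial.continuous p).continuousOn
    have hderiv : ∀ s, deriv (fun u => p.eval u) s = p.derivative.eval s :=
      fun s => Polynomial.deriv p
    rcases (Ne.lt_or_gt (hne x ⟨le_rfl, hxy⟩)) with hneg | hpos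
    · have hall : ∀ z ∈ Set.Icc x y, p.derivative.eval z < 0 := by
        intro z hz
        rcases (Ne.lt_or_gt (hne z hz)) with h | h
        · exact h
        · exfalso
          have h0mem : (0:ℝ) ∈ Set.Icc (p.derivative.eval x) (p.derivative.eval z) :=
            ⟨le_of_lt hneg, le_of_lt h⟩
          have := intermediate_value_Icc hz.1 (p.derivative.continuous.continuousOn) h0mem
          obtain ⟨w, hw, hw0⟩ := this
          exact hne w ⟨le_trans (le_refl x) hw.1, le_trans hw.2 hz.2⟩ hw0
      have hanti : StrictAntiOn (fun s => p.eval s) (Set.Icc x y) := by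
        apply strictAntiOn_of_deriv_neg (convex_Icc x y) hcont
        intro z hz
        rw [interior_Icc] at hz
        rw [hderiv]
        exact hall z ⟨le_of_lt hz.1, le_of_lt hz.2⟩
      have h1 : p.eval t ≤ p.eval x := hanti.antitoneOn ⟨le_rfl, hxy⟩ ⟨htx, hty⟩ htx
      have h2 : p.eval y ≤ p.eval t := hanti.antitoneOn ⟨htx, hty⟩ ⟨hxy, le_rfl⟩ hty
      exact ⟨le_trans h1 (le_max_left _ _), le_trans (min_le_right _ _) h2⟩
    · have hall : ∀ z ∈ Set.Icc x y, 0 < p.derivative.eval z := by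
        intro z hz
        rcases (Ne.lt_or_gt (hne z hz)) with h | h
        · exfalso
          have h0mem : (0:ℝ) ∈ Set.Icc (p.derivative.eval z) (p.derivative.eval x) :=
            ⟨le_of_lt h, le_of_lt hpos⟩
          have := intermediate_value_Icc' hz.1 (p.derivative.continuous.continuousOn) h0mem
          obtain ⟨w, hw, hw0⟩ := this
          exact hne w ⟨hw.1, le_trans hw.2 hz.2⟩ hw0
        · exact h
      have hmono : StrictMonoOn (fun s => p.eval s) (Set.Icc x y) := by
        apply strictMonoOn_of_deriv_pos (convex_Icc x y) hcont
        intro z hz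
        rw [interior_Icc] at hz
        rw [hderiv]
        exact hall z ⟨le_of_lt hz.1, le_of_lt hz.2⟩
      have h1 : p.eval x ≤ p.eval t := hmono.monotoneOn ⟨le_rfl, hxy⟩ ⟨htx, hty⟩ htx
      have h2 : p.eval t ≤ p.eval y := hmono.monotoneOn ⟨htx, hty⟩ ⟨hxy, le_rfl⟩ hty
      exact ⟨le_trans h2 (le_max_right _ _), le_trans (min_le_left _ _) h1⟩

lemma comp_cases (J : Set ℝ) (hJ : IsOpen J) (x : ℝ) (hx : x ∈ J) :
    (volume (connectedComponentIn J x)).toReal = 0 ∨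
    ∃ a b : ℝ, a < b ∧ Set.Ioo a b ⊆ connectedComponentIn J x ∧
      connectedComponentIn J x ⊆ Set.Icc a b ∧
      (volume (connectedComponentIn J x)).toReal = b - a := by
  set S := connectedComponentIn J x with hS
  have hxS : x ∈ S := mem_connectedComponentIn hx
  have hoc : OrdConnected S := isPreconnected_connectedComponentIn.ordConnected
  have hop : IsOpen S := hJ.connectedComponentIn
  by_cases hba : BddAbove S
  · by_cases hbb : BddBelow S
    · right
      set a := sInf S with ha
      set b := sSup S with hb
      have hax : a ≤ x := csInf_le hbb hxS
      have hxb : x ≤ b := le_csSup hba hxS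
      obtain ⟨ε, hε, hball⟩ := Metric.isOpen_iff.mp hop x hxS
      have hxm : x - ε/2 ∈ S := by
        apply hball
        rw [Metric.mem_ball, Real.dist_eq, abs_of_nonpos (by linarith)]
        linarith
      have hab : a < b := by
        have := csInf_le hbb hxm
        linarith [le_csSup hba hxS]
      have hIoo : Set.Ioo a b ⊆ S := by
        intro t ht
        obtain ⟨s₁, hs₁, hs₁t⟩ := exists_lt_of_csInf_lt ⟨x, hxS⟩ ht.1
        obtain ⟨s₂, hs₂, hts₂⟩ := exists_lt_of_lt_csSup ⟨x, hxS⟩ ht.2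
        exact hoc.out hs₁ hs₂ ⟨le_of_lt hs₁t, le_of_lt hts₂⟩
      have hIcc : S ⊆ Set.Icc a b := fun t ht => ⟨csInf_le hbb ht, le_csSup hba ht⟩
      refine ⟨a, b, hab, hIoo, hIcc, ?_⟩
      have h1 : volume S ≤ ENNReal.ofReal (b - a) := by
        calc volume S ≤ volume (Set.Icc a b) := measure_mono hIcc
        _ = ENNReal.ofReal (b - a) := Real.volume_Icc
      have h2 : ENNReal.ofReal (b - a) ≤ volume S := by
        calc ENNReal.ofReal (b - a) = volume (Set.Ioo a b) := Real.volume_Ioo.symm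
        _ ≤ volume S := measure_mono hIoo
      rw [le_antisymm h1 h2, ENNReal.toReal_ofReal (by linarith)]
    · left
      have hIic : Set.Iic x ⊆ S := by
        intro t ht
        rcases eq_or_lt_of_le (Set.mem_Iic.mp ht) with rfl | hlt
        · exact hxS
        · obtain ⟨s, hs, hst⟩ := not_bddBelow_iff.mp hbb t
          exact hoc.out hs hxS ⟨le_of_lt hst, le_of_lt hlt⟩
      have : volume S = ⊤ := by
        refine top_unique ?_
        calc (⊤:ENNReal) = volume (Set.Iic x) := Real.volume_Iic.symm
        _ ≤ volume S := measure_mono hIic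
      rw [this]; rfl
  · left
    have hIci : Set.Ici x ⊆ S := by
      intro t ht
      rcases eq_or_lt_of_le (Set.mem_Ici.mp ht) with rfl | hlt
      · exact hxS
      · obtain ⟨s, hs, hst⟩ := not_bddAbove_iff.mp hba t
        exact hoc.out hxS hs ⟨le_of_lt hlt, le_of_lt hst⟩
    have : volume S = ⊤ := by
      refine top_unique ?_
      calc (⊤:ENNReal) = volume (Set.Ici x) := Real.volume_Ici.symm
      _ ≤ volume S := measure_mono hIci
    rw [this]; rfl

noncomputable def orbPoly (n : ℕ) (X : Matrix (Fin n) (Fin n) ℝ) (q : Fin n → ℝ)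
    (j : Fin n) : Polynomial ℝ :=
  ∑ k ∈ Finset.range n, Polynomial.C ((Matrix.vecMul q (X ^ k)) j / (Nat.factorial k : ℝ))
    * Polynomial.X ^ k

lemma orbPoly_eval (n : ℕ) (X : Matrix (Fin n) (Fin n) ℝ) (q : Fin n → ℝ) (j : Fin n)
    (t : ℝ) : (orbPoly n X q j).eval t = Matrix.vecMul q (unipOneParam n X t) j := by
  rw [orbPoly, Polynomial.eval_finset_sum]
  have : Matrix.vecMul q (unipOneParam n X t) j
      = ∑ k ∈ Finset.range n, (t ^ k / (Nat.factorial k : ℝ)) * Matrix.vecMul q (X ^ k) j := by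
    show dotProduct q _ = _
    rw [dotProduct]
    simp only [unipOneParam, Matrix.sum_apply, Matrix.smul_apply, smul_eq_mul, Finset.mul_sum]
    rw [Finset.sum_comm]
    refine Finset.sum_congr rfl (fun k _ => ?_)
    show _ = _ * dotProduct q _
    rw [dotProduct, Finset.mul_sum]
    refine Finset.sum_congr rfl (fun i _ => ?_)
    ring
  rw [this]
  congr 1
  ext k
  simp [Polynomial.eval_mul, Polynomial.eval_pow]
  ring

lemma orbPoly_natDegree (n : ℕ) (X : Matrix (Fin n) (Fin n) ℝ) (q : Fin n → ℝ) (j : Fin n) :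
    (orbPoly n X q j).natDegree ≤ n - 1 := by
  apply Polynomial.natDegree_sum_le_of_forall_le
  intro k hk
  refine le_trans (Polynomial.natDegree_C_mul_le _ _) ?_
  refine le_trans (Polynomial.natDegree_X_pow_le _) ?_
  have := Finset.mem_range.mp hk
  omega

lemma aeval_eval (n : ℕ) (θ : MvPolynomial (Fin n) ℝ) (F : Fin n → Polynomial ℝ) (t : ℝ) :
    (MvPolynomial.aeval F θ).eval t = MvPolynomial.eval (fun j => (F j).eval t) θ := by
  have h2 := MvPolynomial.comp_aeval_apply (φ := Polynomial.aeval t (R := ℝ)) (f := F) θ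
  simp only [Polynomial.coe_aeval_eq_eval] at h2
  rw [h2]
  have h3 := congrArg (fun (g : MvPolynomial (Fin n) ℝ →+* ℝ) => g θ)
    (MvPolynomial.coe_aeval_eq_eval (f := fun j => (F j).eval t))
  exact h3

lemma aeval_natDegree (n : ℕ) (θ : MvPolynomial (Fin n) ℝ) (F : Fin n → Polynomial ℝ)
    (d : ℕ) (hF : ∀ j, (F j).natDegree ≤ d) :
    (MvPolynomial.aeval F θ).natDegree ≤ θ.totalDegree * d := by
  conv_lhs => rw [θ.as_sum]
  rw [map_sum]
  apply Polynomial.natDegree_sum_le_of_forall_le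
  intro m hm
  rw [MvPolynomial.aeval_monomial]
  refine le_trans (Polynomial.natDegree_mul_le) ?_
  have h1 : (algebraMap ℝ (Polynomial ℝ) (MvPolynomial.coeff m θ)).natDegree = 0 := by
    simp [Polynomial.natDegree_C]
  rw [h1, zero_add]
  refine le_trans (Polynomial.natDegree_prod_le _ _) ?_
  calc ∑ j ∈ m.support, (F j ^ m j).natDegree
      ≤ ∑ j ∈ m.support, m j * d := by
        apply Finset.sum_le_sum
        intro j _
        exact le_trans Polynomial.natDegree_pow_le
          (Nat.mul_le_mul_left _ (hF j))
  _ = (∑ j ∈ m.support, m j) * d := by rw [Finset.sum_mul]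
  _ ≤ θ.totalDegree * d := by
      apply Nat.mul_le_mul_right
      exact MvPolynomial.le_totalDegree hm

lemma comps_key (J : Set ℝ) (Z : Finset ℝ)
    (hclaim : ∀ x y : ℝ, x ∈ J → y ∈ J → x ≤ y → (∀ z ∈ Z, z ∉ Set.Icc x y) →
      Set.Icc x y ⊆ J)
    (S₁ S₂ : Set ℝ)
    (hcomp₁ : ∀ w ∈ S₁, connectedComponentIn J w = S₁)
    (hcomp₂ : ∀ w ∈ S₂, connectedComponentIn J w = S₂)
    (hS₁J : S₁ ⊆ J) (hS₂J : S₂ ⊆ J) (hoc₂ : OrdConnected S₂) (hopen₁ : IsOpen S₁)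
    (hne : S₁ ≠ S₂) (x₀ y₀ : ℝ) (hx₀ : x₀ ∈ S₁) (hy₀ : y₀ ∈ S₂) (hlt : x₀ < y₀) :
    ¬ ((Z.filter (fun z => z ∈ lowerBounds S₁)).max
        = (Z.filter (fun z => z ∈ lowerBounds S₂)).max) := by
  have hdisj : ∀ w, w ∈ S₁ → w ∈ S₂ → False := by
    intro w hw1 hw2
    exact hne ((hcomp₁ w hw1).symm.trans (hcomp₂ w hw2))
  have hS₂gt : ∀ w ∈ S₂, x₀ < w := by
    intro w hw
    rcases lt_or_ge x₀ w with h | h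
    · exact h
    · exact absurd (hoc₂.out hw hy₀ ⟨h, le_of_lt hlt⟩) (fun hc => hdisj x₀ hx₀ hc)
  have hzex : ∃ z ∈ Z, x₀ ≤ z ∧ z ∈ lowerBounds S₂ := by
    by_contra hcon
    push_neg at hcon
    have hch : ∀ z ∈ Z.filter (fun z => x₀ ≤ z), ∃ w ∈ S₂, w < z := by
      intro z hz
      obtain ⟨hzZ, hzx⟩ := Finset.mem_filter.mp hz
      have := hcon z hzZ hzx
      simp only [lowerBounds, Set.mem_setOf_eq] at this
      push_neg at this
      obtain ⟨w, hw, hww⟩ := this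
      exact ⟨w, hw, hww⟩
    choose yz hyz1 hyz2 using hch
    set T : Finset ℝ :=
      insert y₀ ((Z.filter (fun z => x₀ ≤ z)).attach.image (fun z => yz z.1 z.2)) with hT
    have hTne : T.Nonempty := ⟨y₀, Finset.mem_insert_self _ _⟩
    have hTS₂ : ∀ t ∈ T, t ∈ S₂ := by
      intro t ht
      rcases Finset.mem_insert.mp ht with h | h
      · exact h ▸ hy₀
      · obtain ⟨z, _, rfl⟩ := Finset.mem_image.mp h
        exact hyz1 z.1 z.2
    have hymem : T.min' hTne ∈ S₂ := hTS₂ _ (T.min'_mem hTne)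
    have hxy : x₀ < T.min' hTne := hS₂gt _ hymem
    have hnoz : ∀ z ∈ Z, z ∉ Set.Icc x₀ (T.min' hTne) := by
      intro z hzZ hzI
      have hzW : z ∈ Z.filter (fun z => x₀ ≤ z) := Finset.mem_filter.mpr ⟨hzZ, hzI.1⟩
      have h1 : yz z hzW < z := hyz2 z hzW
      have h2 : T.min' hTne ≤ yz z hzW := by
        apply T.min'_le
        exact Finset.mem_insert_of_mem (Finset.mem_image.mpr ⟨⟨z, hzW⟩, Finset.mem_attach _ _, rfl⟩)
      have := hzI.2
      linarith
    have hIccJ : Set.Icc x₀ (T.min' hTne) ⊆ J :=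
      hclaim x₀ _ (hS₁J hx₀) (hS₂J hymem) (le_of_lt hxy) hnoz
    have hIccS₁ : Set.Icc x₀ (T.min' hTne) ⊆ S₁ := by
      have h := isPreconnected_Icc (a := x₀) (b := T.min' hTne) |>.subset_connectedComponentIn
        (Set.left_mem_Icc.mpr (le_of_lt hxy)) hIccJ
      rwa [hcomp₁ x₀ hx₀] at h
    exact hdisj _ (hIccS₁ (Set.right_mem_Icc.mpr (le_of_lt hxy))) hymem
  obtain ⟨z, hzZ, hxz, hzlb⟩ := hzex
  intro heq
  have hzmem : z ∈ Z.filter (fun z => z ∈ lowerBounds S₂) := Finset.mem_filter.mpr ⟨hzZ, hzlb⟩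
  have hle : (z : WithBot ℝ) ≤ (Z.filter (fun z => z ∈ lowerBounds S₂)).max := Finset.le_max hzmem
  rw [← heq] at hle
  rcases hmax : (Z.filter (fun z => z ∈ lowerBounds S₁)).max with _ | m
  · rw [hmax] at hle; exact absurd hle (WithBot.not_coe_le_bot z)
  · have hmmem := Finset.mem_of_max hmax
    obtain ⟨hmZ, hmlb⟩ := Finset.mem_filter.mp hmmem
    rw [hmax] at hle
    have hzm : z ≤ m := WithBot.coe_le_coe.mp hle
    have hmeq : m = x₀ := le_antisymm (hmlb hx₀) (le_trans hxz hzm)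
    obtain ⟨ε, hε, hball⟩ := Metric.isOpen_iff.mp hopen₁ x₀ hx₀
    have hmem2 : x₀ - ε/2 ∈ S₁ := by
      apply hball
      rw [Metric.mem_ball, Real.dist_eq, abs_of_nonpos (by linarith)]
      linarith
    have := hmlb hmem2
    rw [hmeq] at this
    linarith

lemma comps_count (J : Set ℝ) (hJ : IsOpen J) (Z : Finset ℝ)
    (hclaim : ∀ x y : ℝ, x ∈ J → y ∈ J → x ≤ y → (∀ z ∈ Z, z ∉ Set.Icc x y) →
      Set.Icc x y ⊆ J) :
    {S : Set ℝ | ∃ y ∈ J, S = connectedComponentIn J y}.Finite ∧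
    {S : Set ℝ | ∃ y ∈ J, S = connectedComponentIn J y}.ncard ≤ Z.card + 1 := by
  set 𝒞 := {S : Set ℝ | ∃ y ∈ J, S = connectedComponentIn J y} with h𝒞
  set ψ : Set ℝ → WithBot ℝ := fun S => (Z.filter (fun z => z ∈ lowerBounds S)).max with hψ
  have hinj : Set.InjOn ψ 𝒞 := by
    intro S₁ hS₁ S₂ hS₂ heq
    by_contra hne
    obtain ⟨a₁, ha₁, hS₁e⟩ := hS₁
    obtain ⟨a₂, ha₂, hS₂e⟩ := hS₂
    have hcomp₁ : ∀ w ∈ S₁, connectedComponentIn J w = S₁ := by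
      intro w hw; rw [hS₁e] at hw ⊢; exact (connectedComponentIn_eq hw).symm
    have hcomp₂ : ∀ w ∈ S₂, connectedComponentIn J w = S₂ := by
      intro w hw; rw [hS₂e] at hw ⊢; exact (connectedComponentIn_eq hw).symm
    have hJ₁ : S₁ ⊆ J := hS₁e ▸ connectedComponentIn_subset J a₁
    have hJ₂ : S₂ ⊆ J := hS₂e ▸ connectedComponentIn_subset J a₂
    have hoc₁ : OrdConnected S₁ := hS₁e ▸ isPreconnected_connectedComponentIn.ordConnected
    have hoc₂ : OrdConnected S₂ := hS₂e ▸ isPreconnected_connectedComponentIn.ordConnected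
    have hop₁ : IsOpen S₁ := hS₁e ▸ hJ.connectedComponentIn
    have hop₂ : IsOpen S₂ := hS₂e ▸ hJ.connectedComponentIn
    have hx : a₁ ∈ S₁ := hS₁e ▸ mem_connectedComponentIn ha₁
    have hy : a₂ ∈ S₂ := hS₂e ▸ mem_connectedComponentIn ha₂
    have hxyne : a₁ ≠ a₂ := by
      intro h
      subst h
      exact hne ((hcomp₁ a₁ hx).symm.trans (hcomp₂ a₁ hy))
    rcases lt_or_gt_of_ne hxyne with h | h
    · exact comps_key J Z hclaim S₁ S₂ hcomp₁ hcomp₂ hJ₁ hJ₂ hoc₂ hop₁ hne a₁ a₂ hx hy h heq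
    · exact comps_key J Z hclaim S₂ S₁ hcomp₂ hcomp₁ hJ₂ hJ₁ hoc₁ hop₂ (Ne.symm hne) a₂ a₁ hy hx
        h heq.symm
  set F : Finset (WithBot ℝ) := insert (⊥ : WithBot ℝ) (Finset.image (fun z : ℝ => ((z : WithBot ℝ))) Z)
    with hF
  have himg : ψ '' 𝒞 ⊆ ↑F := by
    rintro _ ⟨S, _, rfl⟩
    refine Finset.mem_coe.mpr ?_
    rcases hmax : (Z.filter (fun z => z ∈ lowerBounds S)).max with _ | m
    · rw [show ψ S = ⊥ from hmax, hF]
      exact Finset.mem_insert_self _ _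
    · rw [show ψ S = (m : WithBot ℝ) from hmax, hF]
      exact Finset.mem_insert_of_mem (Finset.mem_image.mpr
        ⟨m, (Finset.mem_filter.mp (Finset.mem_of_max hmax)).1, rfl⟩)
  have himgfin : (ψ '' 𝒞).Finite :=
    Set.Finite.subset (Finset.finite_toSet _) himg
  have hfin : 𝒞.Finite := Set.Finite.of_finite_image himgfin hinj
  refine ⟨hfin, ?_⟩
  calc 𝒞.ncard = (ψ '' 𝒞).ncard := (Set.ncard_image_of_injOn hinj).symm
  _ ≤ F.card := by
      rw [← Set.ncard_coe_finset]
      exact Set.ncard_le_ncard himg (Finset.finite_toSet _)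
  _ ≤ Z.card + 1 := by
      refine le_trans (Finset.card_insert_le _ _) ?_
      have h : (Finset.image (fun z : ℝ => ((z : WithBot ℝ))) Z).card ≤ Z.card :=
        Finset.card_image_le
      exact Nat.add_le_add_right h 1

end Aux

open Polynomial Set in
/-- Dani–Margulis linearization: relative-size neighborhoods of compact pieces of an
algebraic variety giving `β`-regular pairs of return times for all one-parameter
unipotent subgroups. -/
theorem linearization_beta_regular_size (n : ℕ) (θ : MvPolynomial (Fin n) ℝ)
    (β : ℝ) (hβ : 0 < β)
    (D : Set (Fin n → ℝ)) (hDcompact : IsCompact D)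
    (hDA : D ⊆ {v | MvPolynomial.eval v θ = 0}) :
    ∃ D' : Set (Fin n → ℝ), D' ⊆ {v | MvPolynomial.eval v θ = 0} ∧ IsCompact D' ∧
      (∀ x ∈ D, D' ∈ nhdsWithin x {v | MvPolynomial.eval v θ = 0}) ∧
      ∀ Φ : Set (Fin n → ℝ), (∀ x ∈ D', Φ ∈ nhds x) →
        ∃ Ψ : Set (Fin n → ℝ), Ψ ⊆ Φ ∧ (∀ x ∈ D, Ψ ∈ nhds x) ∧
          ∀ q : Fin n → ℝ, q ∉ Φ →
            ∀ X : Matrix (Fin n) (Fin n) ℝ, X ^ n = 0 →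
              PairRegular β {t : ℝ | Matrix.vecMul q (unipOneParam n X t) ∈ Φ}
                  {t : ℝ | Matrix.vecMul q (unipOneParam n X t) ∈ Ψ} ∧
                PairDegreeLE ((θ.totalDegree + 2) * n)
                  {t : ℝ | Matrix.vecMul q (unipOneParam n X t) ∈ Φ}
                  {t : ℝ | Matrix.vecMul q (unipOneParam n X t) ∈ Ψ} := by
  classical
  set E := θ.totalDegree with hE
  set N : (Fin n → ℝ) → ℝ := fun v => ∑ j, (v j)^2 with hN
  have hNcont : Continuous N := by
    apply continuous_finset_sum
    intro j _
    exact (continuous_apply j).pow 2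
  have hNnonneg : ∀ v, 0 ≤ N v := fun v => Finset.sum_nonneg (fun j _ => sq_nonneg _)
  have hAclosed : IsClosed {v : Fin n → ℝ | MvPolynomial.eval v θ = 0} :=
    isClosed_eq (MvPolynomial.continuous_eval θ) continuous_const
  obtain ⟨r, hr1, hrD⟩ : ∃ r : ℝ, 1 ≤ r ∧ ∀ v ∈ D, N v < r := by
    rcases D.eq_empty_or_nonempty with rfl | hne
    · exact ⟨1, le_rfl, by simp⟩
    · obtain ⟨M, hM⟩ := (hDcompact.image hNcont).bddAbove
      refine ⟨max M 1 + 1, by simp, fun v hv => ?_⟩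
      have h1 : N v ≤ M := hM ⟨v, hv, rfl⟩
      have h2 : M ≤ max M 1 := le_max_left _ _
      linarith
  have hr0 : (0:ℝ) < r := by linarith
  set d : ℕ := max (max (E * (n-1)) (2*(n-1))) 1 with hd
  have hd1 : 1 ≤ d := le_max_right _ _
  have hd1R : (1:ℝ) ≤ (d:ℝ) := by exact_mod_cast hd1
  set Cr : ℝ := ((d:ℝ)+1) * ((1+β)*d)^d with hCr
  have hCr1 : (1:ℝ) ≤ Cr := by
    have h1 : (1:ℝ) ≤ (1+β)*d := by nlinarith
    have h2 : (1:ℝ) ≤ ((1+β)*(d:ℝ))^d := one_le_pow₀ h1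
    nlinarith
  have hCr0 : (0:ℝ) < Cr := by linarith
  set R2 : ℝ := Cr * r with hR2
  have hrR2 : r ≤ R2 := by nlinarith
  have hR2pos : 0 < R2 := by linarith
  set D' : Set (Fin n → ℝ) := {v | MvPolynomial.eval v θ = 0 ∧ N v ≤ R2} with hD'
  have hsub : ∀ c : ℝ, {v : Fin n → ℝ | N v ≤ c} ⊆ Metric.closedBall 0 (Real.sqrt c) := by
    intro c v hv
    rw [Metric.mem_closedBall, dist_zero_right]
    rw [pi_norm_le_iff_of_nonneg (Real.sqrt_nonneg c)]
    intro j
    rw [Real.norm_eq_abs, ← Real.sqrt_sq_eq_abs]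
    apply Real.sqrt_le_sqrt
    calc (v j)^2 ≤ N v :=
          Finset.single_le_sum (f := fun i => (v i)^2) (fun i _ => sq_nonneg _)
            (Finset.mem_univ j)
    _ ≤ c := hv
  have hKclosed : ∀ c : ℝ, IsClosed {v : Fin n → ℝ | |MvPolynomial.eval v θ| ≤ c ∧ N v ≤ c * R2} := by
    intro c
    have : {v : Fin n → ℝ | |MvPolynomial.eval v θ| ≤ c ∧ N v ≤ c * R2}
        = {v | |MvPolynomial.eval v θ| ≤ c} ∩ {v | N v ≤ c * R2} := rfl
    rw [this]
    exact IsClosed.inter (isClosed_le (MvPolynomial.continuous_eval θ).abs continuous_const)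
      (isClosed_le hNcont continuous_const)
  have hD'compact : IsCompact D' := by
    apply Metric.isCompact_of_isClosed_isBounded
    · have : D' = {v : Fin n → ℝ | MvPolynomial.eval v θ = 0} ∩ {v | N v ≤ R2} := rfl
      rw [this]
      exact IsClosed.inter hAclosed (isClosed_le hNcont continuous_const)
    · apply Bornology.IsBounded.subset (Metric.isBounded_closedBall
        (x := (0 : Fin n → ℝ)) (r := Real.sqrt R2))
      exact fun v hv => hsub R2 hv.2
  refine ⟨D', fun v hv => hv.1, hD'compact, ?_, ?_⟩
  · intro x hxD
    rw [mem_nhdsWithin]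
    refine ⟨{v | N v < R2}, isOpen_lt hNcont continuous_const,
      lt_of_lt_of_le (hrD x hxD) hrR2, ?_⟩
    rintro v ⟨hv1, hv2⟩
    exact ⟨hv2, le_of_lt hv1⟩
  · intro Φ hΦ
    set O := interior Φ with hO
    have hD'O : D' ⊆ O := fun x hx => mem_interior_iff_mem_nhds.mpr (hΦ x hx)
    have hOopen : IsOpen O := isOpen_interior
    have hOΦ : O ⊆ Φ := interior_subset
    obtain ⟨ε, hε0, hεK⟩ : ∃ ε : ℝ, 0 < ε ∧
        {v : Fin n → ℝ | |MvPolynomial.eval v θ| ≤ ε ∧ N v ≤ R2} ⊆ O := by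
      by_contra hcon
      push_neg at hcon
      set Y : ℕ → Set (Fin n → ℝ) :=
        fun m => {v | |MvPolynomial.eval v θ| ≤ 1/(m+1) ∧ N v ≤ R2} \ O with hY
      have hYanti : ∀ m m' : ℕ, m ≤ m' → Y m' ⊆ Y m := by
        intro m m' hmm v hv
        refine ⟨⟨le_trans hv.1.1 ?_, hv.1.2⟩, hv.2⟩
        apply div_le_div_of_nonneg_left (by norm_num) (by positivity)
        have : (m:ℝ) ≤ m' := by exact_mod_cast hmm
        linarith
      have hYne : ∀ m, (Y m).Nonempty := by
        intro m
        obtain ⟨v, hv1, hv2⟩ := Set.not_subset.mp (hcon (1/(m+1)) (by positivity))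
        exact ⟨v, hv1, hv2⟩
      have hYclosed : ∀ m, IsClosed (Y m) := by
        intro m
        change IsClosed ({v : Fin n → ℝ | |MvPolynomial.eval v θ| ≤ 1/(m+1) ∧ N v ≤ R2} \ O)
        rw [Set.diff_eq]
        refine IsClosed.inter ?_ (isClosed_compl_iff.mpr hOopen)
        have : {v : Fin n → ℝ | |MvPolynomial.eval v θ| ≤ 1/(m+1) ∧ N v ≤ R2}
            = {v | |MvPolynomial.eval v θ| ≤ 1/(m+1)} ∩ {v | N v ≤ R2} := rfl
        rw [this]
        exact IsClosed.inter (isClosed_le (MvPolynomial.continuous_eval θ).abs continuous_const)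
          (isClosed_le hNcont continuous_const)
      have hYcompact : ∀ m, IsCompact (Y m) := by
        intro m
        apply Metric.isCompact_of_isClosed_isBounded (hYclosed m)
        apply Bornology.IsBounded.subset (Metric.isBounded_closedBall
          (x := (0 : Fin n → ℝ)) (r := Real.sqrt R2))
        exact fun v hv => hsub R2 hv.1.2
      have hYdir : Directed (· ⊇ ·) Y := by
        intro m m'
        exact ⟨max m m', hYanti m (max m m') (le_max_left _ _),
          hYanti m' (max m m') (le_max_right _ _)⟩
      obtain ⟨v, hv⟩ := IsCompact.nonempty_iInter_of_directed_nonempty_isCompact_isClosed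
        Y hYdir hYne hYcompact hYclosed
      have hv' : ∀ m : ℕ, v ∈ Y m := fun m => Set.mem_iInter.mp hv m
      have hθv : MvPolynomial.eval v θ = 0 := by
        by_contra h0
        have habs : 0 < |MvPolynomial.eval v θ| := abs_pos.mpr h0
        obtain ⟨m, hm⟩ := exists_nat_gt (1/|MvPolynomial.eval v θ|)
        have h1 : |MvPolynomial.eval v θ| ≤ 1/(m+1) := (hv' m).1.1
        have h2 : 1/|MvPolynomial.eval v θ| < m + 1 := by
          have : (0:ℝ) ≤ m := Nat.cast_nonneg m
          linarith
        have h3 : 1/((m:ℝ)+1) < |MvPolynomial.eval v θ| := by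
          rw [div_lt_iff₀ (by positivity)]
          rw [div_lt_iff₀ habs] at h2
          linarith
        linarith
      exact (hv' 0).2 (hD'O ⟨hθv, (hv' 0).1.2⟩)
    set ε' : ℝ := ε / Cr with hε'
    have hε'pos : 0 < ε' := div_pos hε0 hCr0
    have hε'ε : ε' ≤ ε := by
      rw [hε', div_le_iff₀ hCr0]
      nlinarith
    have hCrε : Cr * ε' = ε := by
      rw [hε', mul_div_cancel₀ _ (ne_of_gt hCr0)]
    set Ψ : Set (Fin n → ℝ) := {v | |MvPolynomial.eval v θ| < ε' ∧ N v < r} with hΨ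
    have hΨopen : IsOpen Ψ := by
      have : Ψ = {v | |MvPolynomial.eval v θ| < ε'} ∩ {v | N v < r} := rfl
      rw [this]
      exact IsOpen.inter (isOpen_lt (MvPolynomial.continuous_eval θ).abs continuous_const)
        (isOpen_lt hNcont continuous_const)
    have hΨΦ : Ψ ⊆ Φ := by
      intro v hv
      exact hOΦ (hεK ⟨le_trans (le_of_lt hv.1) hε'ε, le_trans (le_of_lt hv.2) hrR2⟩)
    refine ⟨Ψ, hΨΦ, ?_, ?_⟩
    · intro x hxD
      apply hΨopen.mem_nhds
      refine ⟨?_, hrD x hxD⟩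
      have h0 : MvPolynomial.eval x θ = 0 := hDA hxD
      show |MvPolynomial.eval x θ| < ε'
      rw [h0, abs_zero]
      exact hε'pos
    · intro q hq X hX
      by_cases hn0 : n = 0
      · subst hn0
        have horbq : ∀ t : ℝ, Matrix.vecMul q (unipOneParam 0 X t) = q := by
          intro t
          apply Subsingleton.elim
        have hIempty : {t : ℝ | Matrix.vecMul q (unipOneParam 0 X t) ∈ Φ} = ∅ := by
          ext t
          simp only [Set.mem_setOf_eq, horbq t, Set.mem_empty_iff_false, iff_false]
          exact hq
        constructor
        · intro x hx
          exfalso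
          have : x ∈ ({} : Set ℝ) := by
            rw [← hIempty]
            exact hΨΦ hx
          exact this
        · intro x hx
          rw [hIempty] at hx
          exact absurd hx (Set.notMem_empty x)
      have hn1 : 1 ≤ n := Nat.one_le_iff_ne_zero.mpr hn0
      set F : Fin n → Polynomial ℝ := orbPoly n X q with hFdef
      set f : Polynomial ℝ := MvPolynomial.aeval F θ with hfdef
      set g : Polynomial ℝ := ∑ j : Fin n, (F j)^2 with hgdef
      have horb : ∀ t : ℝ, (fun j => (F j).eval t) = Matrix.vecMul q (unipOneParam n X t) := by
        intro t; funext j; exact orbPoly_eval n X q j t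
      have hfeval : ∀ t, f.eval t = MvPolynomial.eval (Matrix.vecMul q (unipOneParam n X t)) θ := by
        intro t
        rw [hfdef, aeval_eval, horb]
      have hgeval : ∀ t, g.eval t = N (Matrix.vecMul q (unipOneParam n X t)) := by
        intro t
        rw [hgdef, Polynomial.eval_finset_sum, ← horb t]
        simp only [hN, Polynomial.eval_pow]
      have hfdeg' : f.natDegree ≤ E * (n-1) :=
        aeval_natDegree n θ F (n-1) (orbPoly_natDegree n X q)
      have hfdeg : f.natDegree ≤ d :=
        le_trans hfdeg' (le_trans (le_max_left _ _) (le_max_left _ _))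
      have hgdeg' : g.natDegree ≤ 2*(n-1) := by
        rw [hgdef]
        apply Polynomial.natDegree_sum_le_of_forall_le
        intro j _
        refine le_trans Polynomial.natDegree_pow_le ?_
        exact Nat.mul_le_mul_left 2 (orbPoly_natDegree n X q j)
      have hgdeg : g.natDegree ≤ d :=
        le_trans hgdeg' (le_trans (le_max_right _ _) (le_max_left _ _))
      set J := {t : ℝ | Matrix.vecMul q (unipOneParam n X t) ∈ Ψ} with hJ
      set I := {t : ℝ | Matrix.vecMul q (unipOneParam n X t) ∈ Φ} with hI
      have hJdef : J = {t : ℝ | |f.eval t| < ε' ∧ g.eval t < r} := by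
        ext t
        constructor
        · intro h
          exact ⟨by rw [hfeval]; exact h.1, by rw [hgeval]; exact h.2⟩
        · intro h
          exact ⟨by rw [← hfeval]; exact h.1, by rw [← hgeval]; exact h.2⟩
      have hJI : J ⊆ I := fun t ht => hΨΦ ht
      have hJopen : IsOpen J := by
        rw [hJdef]
        have : {t : ℝ | |f.eval t| < ε' ∧ g.eval t < r}
            = {t | |f.eval t| < ε'} ∩ {t | g.eval t < r} := rfl
        rw [this]
        exact IsOpen.inter (isOpen_lt f.continuous.abs continuous_const)
          (isOpen_lt g.continuous continuous_const)
      set Z : Finset ℝ := f.derivative.roots.toFinset ∪ g.derivative.roots.toFinset with hZ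
      have hclaim : ∀ x y : ℝ, x ∈ J → y ∈ J → x ≤ y →
          (∀ z ∈ Z, z ∉ Set.Icc x y) → Set.Icc x y ⊆ J := by
        intro x y hx hy hxy hz
        rw [hJdef] at hx hy
        intro t ht
        have hfb := poly_between f x y t ht
          (fun z hzI hzF => hz z (Finset.mem_union_left _ hzF) hzI)
        have hgb := poly_between g x y t ht
          (fun z hzI hzF => hz z (Finset.mem_union_right _ hzF) hzI)
        rw [hJdef]
        refine ⟨abs_lt.mpr ⟨?_, ?_⟩, ?_⟩
        · have h1 : -ε' < min (f.eval x) (f.eval y) :=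
            lt_min (abs_lt.mp hx.1).1 (abs_lt.mp hy.1).1
          linarith [hfb.2]
        · have h1 : max (f.eval x) (f.eval y) < ε' :=
            max_lt (abs_lt.mp hx.1).2 (abs_lt.mp hy.1).2
          linarith [hfb.1]
        · exact lt_of_le_of_lt hgb.1 (max_lt hx.2 hy.2)
      have hcount := comps_count J hJopen Z hclaim
      have hZcard : Z.card + 1 ≤ (E + 2) * n := by
        have h1 : Z.card ≤ f.derivative.roots.toFinset.card + g.derivative.roots.toFinset.card :=
          Finset.card_union_le _ _
        have h2 : f.derivative.roots.toFinset.card ≤ E * (n-1) := by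
          refine le_trans (Multiset.toFinset_card_le _) ?_
          refine le_trans (Polynomial.card_roots' _) ?_
          refine le_trans (Polynomial.natDegree_derivative_le f) ?_
          omega
        have h3 : g.derivative.roots.toFinset.card ≤ 2 * (n-1) := by
          refine le_trans (Multiset.toFinset_card_le _) ?_
          refine le_trans (Polynomial.card_roots' _) ?_
          refine le_trans (Polynomial.natDegree_derivative_le g) ?_
          omega
        calc Z.card + 1 ≤ E * (n-1) + 2 * (n-1) + 1 := by omega
        _ = (E+2)*(n-1) + 1 := by ring
        _ ≤ (E+2)*(n-1) + (E+2) := by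
            apply Nat.add_le_add_left
            omega
        _ = (E+2)*((n-1)+1) := by ring
        _ = (E+2)*n := by rw [Nat.sub_add_cancel hn1]
      constructor
      · -- PairRegular
        intro x hx t ht
        rcases comp_cases J hJopen x hx with h0 | ⟨a, b, hab, hIoo, hIcc, hlen⟩
        · have hlen0 : len (connectedComponentIn J x) = 0 := h0
          rw [hlen0]
          simp only [mul_zero, add_zero, sub_zero]
          have hmono := connectedComponentIn_mono x hJI
          exact ⟨hmono ht, hmono ht⟩
        · have hLpos : 0 < b - a := by linarith
          have hfle : ∀ s ∈ Set.Icc a b, |f.eval s| ≤ ε' := by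
            have hclosed : IsClosed {s : ℝ | |f.eval s| ≤ ε'} :=
              isClosed_le f.continuous.abs continuous_const
            have hIooQ : Set.Ioo a b ⊆ {s : ℝ | |f.eval s| ≤ ε'} := by
              intro s hs
              have hsJ : s ∈ J := connectedComponentIn_subset J x (hIoo hs)
              rw [hJdef] at hsJ
              exact le_of_lt hsJ.1
            have := closure_minimal hIooQ hclosed
            rw [closure_Ioo (ne_of_lt hab)] at this
            exact fun s hs => this hs
          have hgle : ∀ s ∈ Set.Icc a b, |g.eval s| ≤ r := by
            have hclosed : IsClosed {s : ℝ | |g.eval s| ≤ r} :=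
              isClosed_le g.continuous.abs continuous_const
            have hIooQ : Set.Ioo a b ⊆ {s : ℝ | |g.eval s| ≤ r} := by
              intro s hs
              have hsJ : s ∈ J := connectedComponentIn_subset J x (hIoo hs)
              rw [hJdef] at hsJ
              have hg0 : 0 ≤ g.eval s := by
                rw [hgeval]
                exact hNnonneg _
              show |g.eval s| ≤ r
              rw [abs_le]
              exact ⟨by linarith, le_of_lt hsJ.2⟩
            have := closure_minimal hIooQ hclosed
            rw [closure_Ioo (ne_of_lt hab)] at this
            exact fun s hs => this hs
          have hIsub : Set.Icc (a - β*(b-a)) (b + β*(b-a)) ⊆ I := by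
            intro s hs
            have h1 := poly_growth d hd1 β hβ f hfdeg a b ε' hab hfle s hs
            have h2 := poly_growth d hd1 β hβ g hgdeg a b r hab hgle s hs
            rw [← hCr] at h1 h2
            show Matrix.vecMul q (unipOneParam n X s) ∈ Φ
            apply hOΦ
            apply hεK
            constructor
            · show |MvPolynomial.eval (Matrix.vecMul q (unipOneParam n X s)) θ| ≤ ε
              rw [← hfeval]
              calc |f.eval s| ≤ Cr * ε' := h1
              _ = ε := hCrε
            · show N _ ≤ R2
              have h3 : N (Matrix.vecMul q (unipOneParam n X s)) = g.eval s := (hgeval s).symm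
              rw [h3]
              calc g.eval s ≤ |g.eval s| := le_abs_self _
              _ ≤ Cr * r := h2
              _ = R2 := rfl
          have hxmem : x ∈ Set.Icc (a - β*(b-a)) (b + β*(b-a)) := by
            have hx' : x ∈ Set.Icc a b := hIcc (mem_connectedComponentIn hx)
            constructor
            · have : 0 ≤ β*(b-a) := by positivity
              linarith [hx'.1]
            · have : 0 ≤ β*(b-a) := by positivity
              linarith [hx'.2]
          have hIccComp : Set.Icc (a - β*(b-a)) (b + β*(b-a)) ⊆ connectedComponentIn I x :=
            isPreconnected_Icc.subset_connectedComponentIn hxmem hIsub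
          have hlen2 : len (connectedComponentIn J x) = b - a := hlen
          rw [hlen2]
          have htab : t ∈ Set.Icc a b := hIcc ht
          have hβL : 0 ≤ β*(b-a) := by positivity
          constructor
          · apply hIccComp
            constructor
            · linarith [htab.1]
            · linarith [htab.2]
          · apply hIccComp
            constructor
            · linarith [htab.1]
            · linarith [htab.2]
      · -- PairDegreeLE
        intro x hx
        have hsub2 : {S : Set ℝ | ∃ y ∈ J, S = connectedComponentIn J y ∧
              S ⊆ connectedComponentIn I x}
            ⊆ {S : Set ℝ | ∃ y ∈ J, S = connectedComponentIn J y} := by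
          rintro S ⟨y, hy, h1, _⟩
          exact ⟨y, hy, h1⟩
        refine ⟨hcount.1.subset hsub2, ?_⟩
        refine le_trans (Set.ncard_le_ncard hsub2 hcount.1) (le_trans hcount.2 hZcard)
end
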